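/- arXiv:1612.01001 — 12 statements merged into one kernel-verified Lean document; each statement's English description precedes it below -/
import Mathlib

section
/- Let G be a locally compact group with Property PL. Suppose G acts on a nonempty metric space X by uniformly Lipschitz transformations, i.e. there is a constant C ≥ 1 such that each g ∈ G acts as a C-Lipschitz bijection of X, and the action is locally bounded, i.e. for every compact subset K of G and every x ∈ X the set K·x is bounded. Then the action is either bounded (every orbit is bounded) or metrically proper (for every bounded subset B of X, the set {g ∈ G : B ∩ gB ≠ ∅} has compact closure in G). -/
open scoped NNReal Topology

/-- A semigroup length on a topological group: nonnegative, bounded on compact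
subsets, and subadditive. -/
def IsSemigroupLength {G : Type*} [Group G] [TopologicalSpace G] (L : G → ℝ) : Prop :=
  (∀ x, 0 ≤ L x) ∧ (∀ K : Set G, IsCompact K → ∃ M : ℝ, ∀ x ∈ K, L x ≤ M) ∧
    (∀ x y, L (x * y) ≤ L x + L y)

/-- A length is a symmetric semigroup length. -/
def IsLength {G : Type*} [Group G] [TopologicalSpace G] (L : G → ℝ) : Prop :=
  IsSemigroupLength L ∧ ∀ x, L x = L x⁻¹

/-- A length is proper if all its sublevel sets have compact closure. -/
def IsProperLength {G : Type*} [Group G] [TopologicalSpace G] (L : G → ℝ) : Prop :=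
  ∀ c : ℝ, IsCompact (closure {x : G | L x ≤ c})

/-- Property PL: every length is either bounded or proper. -/
def HasPL (G : Type*) [Group G] [TopologicalSpace G] : Prop :=
  ∀ L : G → ℝ, IsLength L → (∃ M : ℝ, ∀ x, L x ≤ M) ∨ IsProperLength L

/-- Strong Property PL: every semigroup length is either bounded or proper. -/
def HasStrongPL (G : Type*) [Group G] [TopologicalSpace G] : Prop :=
  ∀ L : G → ℝ, IsSemigroupLength L → (∃ M : ℝ, ∀ x, L x ≤ M) ∨ IsProperLength L

section Aux

variable {G : Type*} [Group G] {X : Type*} [MetricSpace X]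
  (ρ : G →* Equiv.Perm X) (C : ℝ≥0) (hLip : ∀ g : G, LipschitzWith C (ρ g))

/-- The invariant pseudo-distance obtained as supremum over the group. -/
noncomputable def supD (x y : X) : ℝ := ⨆ g : G, dist (ρ g x) (ρ g y)

variable {ρ C}

theorem supD_bdd (hLip : ∀ g : G, LipschitzWith C (ρ g)) (x y : X) :
    BddAbove (Set.range fun g : G => dist (ρ g x) (ρ g y)) := by
  refine ⟨C * dist x y, ?_⟩
  rintro r ⟨g, rfl⟩
  exact (hLip g).dist_le_mul x y

theorem supD_le (hLip : ∀ g : G, LipschitzWith C (ρ g)) (x y : X) :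
    supD ρ x y ≤ C * dist x y :=
  ciSup_le fun g => (hLip g).dist_le_mul x y

theorem dist_le_supD (hLip : ∀ g : G, LipschitzWith C (ρ g)) (x y : X) :
    dist x y ≤ supD ρ x y := by
  have := le_ciSup (supD_bdd hLip x y) (1 : G)
  simpa [map_one, supD] using this

theorem supD_symm (x y : X) : supD ρ x y = supD ρ y x := by
  unfold supD
  simp [dist_comm]

theorem supD_triangle (hLip : ∀ g : G, LipschitzWith C (ρ g)) (x y z : X) :
    supD ρ x z ≤ supD ρ x y + supD ρ y z :=
  ciSup_le fun g => (dist_triangle (ρ g x) (ρ g y) (ρ g z)).trans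
    (add_le_add (le_ciSup (supD_bdd hLip x y) g) (le_ciSup (supD_bdd hLip y z) g))

theorem supD_invariant (h : G) (x y : X) :
    supD ρ (ρ h x) (ρ h y) = supD ρ x y := by
  unfold supD
  have hfun : (fun g : G => dist (ρ g (ρ h x)) (ρ g (ρ h y)))
      = (fun g : G => dist (ρ g x) (ρ g y)) ∘ (fun g : G => g * h) := by
    funext g
    simp [map_mul, Equiv.Perm.mul_apply]
  have hsurj : Function.Surjective (fun g : G => g * h) :=
    fun b => ⟨b * h⁻¹, by simp⟩
  rw [iSup, iSup, hfun, hsurj.range_comp]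

end Aux

/-- a locally compact group with Property PL acts on a nonempty metric
space by uniformly Lipschitz bijections, with a locally bounded action; then the
action is bounded or metrically proper. -/
theorem stmt_0 {G : Type*} [Group G] [TopologicalSpace G] [IsTopologicalGroup G]
    [LocallyCompactSpace G] (hPL : HasPL G)
    {X : Type*} [MetricSpace X] [Nonempty X]
    (ρ : G →* Equiv.Perm X) (C : ℝ≥0) (hC : 1 ≤ C)
    (hLip : ∀ g : G, LipschitzWith C (ρ g))
    (hloc : ∀ K : Set G, IsCompact K → ∀ x : X,
      Bornology.IsBounded ((fun g => ρ g x) '' K)) :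
    (∀ x : X, Bornology.IsBounded (Set.range fun g => ρ g x)) ∨
      (∀ B : Set X, Bornology.IsBounded B →
        IsCompact (closure {g : G | (B ∩ (⇑(ρ g) '' B)).Nonempty})) := by
  obtain ⟨x₀⟩ := ‹Nonempty X›
  set L : G → ℝ := fun g => supD ρ x₀ (ρ g x₀) with hL
  have hLnonneg : ∀ g, 0 ≤ L g := fun g =>
    dist_nonneg.trans (dist_le_supD hLip x₀ (ρ g x₀))
  have hLsub : ∀ g h : G, L (g * h) ≤ L g + L h := by
    intro g h
    have h1 : L (g * h) ≤ supD ρ x₀ (ρ g x₀) + supD ρ (ρ g x₀) (ρ (g * h) x₀) :=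
      supD_triangle hLip _ _ _
    have h2 : supD ρ (ρ g x₀) (ρ (g * h) x₀) = L h := by
      have : ρ (g * h) x₀ = ρ g (ρ h x₀) := by simp [map_mul, Equiv.Perm.mul_apply]
      rw [this, supD_invariant]
    rw [h2] at h1
    exact h1
  have hLlen : IsLength L := by
    refine ⟨⟨hLnonneg, ?_, hLsub⟩, ?_⟩
    · intro K hK
      obtain ⟨r, hr⟩ := (Metric.isBounded_iff_subset_closedBall x₀).1 (hloc K hK x₀)
      refine ⟨C * r, fun g hg => ?_⟩
      have hd : dist (ρ g x₀) x₀ ≤ r := hr ⟨g, hg, rfl⟩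
      calc L g ≤ C * dist x₀ (ρ g x₀) := supD_le hLip x₀ (ρ g x₀)
        _ ≤ C * r := by
            rw [dist_comm]
            exact mul_le_mul_of_nonneg_left hd C.coe_nonneg
    · intro g
      have h1 : ρ g (ρ g⁻¹ x₀) = x₀ := by
        rw [← Equiv.Perm.mul_apply, ← map_mul]
        simp
      show supD ρ x₀ (ρ g x₀) = supD ρ x₀ (ρ g⁻¹ x₀)
      rw [← supD_invariant g x₀ (ρ g⁻¹ x₀), h1, supD_symm]
  rcases hPL L hLlen with ⟨M, hM⟩ | hproper
  · left
    intro x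
    rw [Metric.isBounded_iff_subset_closedBall x₀]
    refine ⟨C * dist x x₀ + M, ?_⟩
    rintro y ⟨g, rfl⟩
    have h1 : dist (ρ g x) (ρ g x₀) ≤ C * dist x x₀ := (hLip g).dist_le_mul x x₀
    have h2 : dist (ρ g x₀) x₀ ≤ M := by
      calc dist (ρ g x₀) x₀ = dist x₀ (ρ g x₀) := dist_comm _ _
        _ ≤ L g := dist_le_supD hLip _ _
        _ ≤ M := hM g
    calc dist (ρ g x) x₀ ≤ dist (ρ g x) (ρ g x₀) + dist (ρ g x₀) x₀ := dist_triangle _ _ _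
      _ ≤ C * dist x x₀ + M := add_le_add h1 h2
  · right
    intro B hB
    obtain ⟨r, hr⟩ := (Metric.isBounded_iff_subset_closedBall x₀).1 hB
    have hsub : {g : G | (B ∩ (⇑(ρ g) '' B)).Nonempty} ⊆ {g : G | L g ≤ C * r + C * r} := by
      rintro g ⟨b, hbB, b', hb'B, hbb'⟩
      have hb : dist b x₀ ≤ r := hr hbB
      have hb' : dist b' x₀ ≤ r := hr hb'B
      have h1 : L g ≤ supD ρ x₀ (ρ g b') + supD ρ (ρ g b') (ρ g x₀) :=
        supD_triangle hLip _ _ _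
      have h2 : supD ρ (ρ g b') (ρ g x₀) = supD ρ b' x₀ := supD_invariant g _ _
      have h3 : supD ρ x₀ (ρ g b') ≤ C * r := by
        rw [hbb']
        calc supD ρ x₀ b ≤ C * dist x₀ b := supD_le hLip _ _
          _ ≤ C * r := by
              rw [dist_comm]; exact mul_le_mul_of_nonneg_left hb C.coe_nonneg
      have h4 : supD ρ b' x₀ ≤ C * r := by
        calc supD ρ b' x₀ ≤ C * dist b' x₀ := supD_le hLip _ _
          _ ≤ C * r := mul_le_mul_of_nonneg_left hb' C.coe_nonneg
      calc L g ≤ supD ρ x₀ (ρ g b') + supD ρ b' x₀ := by rw [← h2]; exact h1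
        _ ≤ C * r + C * r := add_le_add h3 h4
    exact (hproper (C * r + C * r)).of_isClosed_subset isClosed_closure (closure_mono hsub)
end

section
/- Let G be a compactly generated locally compact group. Suppose that for every subset S of G generating G as a semigroup, either S has compact closure or G = Sⁿ for some natural number n. Then G has strong Property PL, i.e. every semigroup length on G is either bounded or proper. -/
open scoped NNReal Topology Pointwise

/-- a compactly generated locally compact group in which every
semigroup-generating subset either has compact closure or satisfies `G = Sⁿ`
for some `n`, has strong Property PL. -/
theorem stmt_4 {G : Type*} [Group G] [TopologicalSpace G] [IsTopologicalGroup G]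
    [LocallyCompactSpace G]
    (hcg : ∃ K : Set G, IsCompact K ∧ Subgroup.closure K = ⊤)
    (h : ∀ S : Set G, (∀ g : G, ∃ n : ℕ, 0 < n ∧ g ∈ S ^ n) →
      IsCompact (closure S) ∨ ∃ n : ℕ, S ^ n = Set.univ) :
    HasStrongPL G := by
  intro L hL
  obtain ⟨hpos, hbdd, hsub⟩ := hL
  obtain ⟨K, hK, hgen⟩ := hcg
  set K' : Set G := (K ∪ K⁻¹) ∪ {1} with hK'def
  have hK'c : IsCompact K' := (hK.union hK.inv).union isCompact_singleton
  obtain ⟨M, hM⟩ := hbdd K' hK'c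
  have h1K' : (1 : G) ∈ K' := by simp [hK'def]
  have hM1 : L 1 ≤ M := hM 1 h1K'
  have hK'symm : K'⁻¹ ⊆ K' := by
    intro y hy
    rcases hy with hy | hy
    · rcases hy with hy | hy
      · exact Or.inl (Or.inr hy)
      · exact Or.inl (Or.inl (by simpa using hy))
    · simp only [Set.mem_inv, Set.mem_singleton_iff, inv_eq_one] at hy
      exact Or.inr hy
  -- list product lemma
  have listpow : ∀ (S : Set G) (l : List G), (∀ y ∈ l, y ∈ S) → l.prod ∈ S ^ l.length := by
    intro S l
    induction l with
    | nil => intro _; simp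
    | cons a t ih =>
      intro hmem
      rw [List.prod_cons, List.length_cons, pow_succ']
      exact Set.mul_mem_mul (hmem a (List.mem_cons_self (a := a) (l := t))) (ih fun y hy => hmem y (List.mem_cons_of_mem _ hy))
  -- bound on powers
  have powbound : ∀ (c : ℝ), L 1 ≤ c → ∀ (n : ℕ) (x : G),
      x ∈ {y : G | L y ≤ c} ^ n → L x ≤ n * c + c := by
    intro c hc n
    induction n with
    | zero =>
      intro x hx
      rw [pow_zero] at hx
      simp only [Set.mem_one] at hx
      subst hx
      simpa using hc
    | succ n ih =>
      intro x hx
      rw [pow_succ] at hx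
      obtain ⟨a, ha, b, hb, rfl⟩ := hx
      have hb' : L b ≤ c := hb
      have := hsub a b
      have h0 : (0:ℝ) ≤ L b := hpos b
      have := ih a ha
      push_cast
      nlinarith
  -- generation
  have hgen' : ∀ (c : ℝ), M ≤ c → ∀ g : G, ∃ n : ℕ, 0 < n ∧ g ∈ {y : G | L y ≤ c} ^ n := by
    intro c hc g
    have hg : g ∈ Subgroup.closure K' := by
      have : Subgroup.closure K ≤ Subgroup.closure K' :=
        Subgroup.closure_mono (fun x hx => Or.inl (Or.inl hx))
      exact this (by rw [hgen]; trivial)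
    have hg' : g ∈ Submonoid.closure (K' ∪ K'⁻¹) := by
      rw [← Subgroup.closure_toSubmonoid]
      exact hg
    obtain ⟨l, hl, hprod⟩ := Submonoid.exists_list_of_mem_closure hg'
    have hlmem : ∀ y ∈ l, y ∈ {y : G | L y ≤ c} := by
      intro y hy
      have : y ∈ K' := by
        rcases hl y hy with h' | h'
        · exact h'
        · exact hK'symm h'
      exact le_trans (hM y this) hc
    rcases Nat.eq_zero_or_pos l.length with h0 | h0
    · refine ⟨1, Nat.one_pos, ?_⟩
      rw [pow_one]
      have : l = [] := List.length_eq_zero_iff.mp h0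
      subst this
      simp only [List.prod_nil] at hprod
      subst hprod
      exact le_trans hM1 hc
    · refine ⟨l.length, h0, ?_⟩
      rw [← hprod]
      exact listpow _ l hlmem
  by_cases hb : ∃ M' : ℝ, ∀ x, L x ≤ M'
  · exact Or.inl hb
  · right
    intro c'
    set c := max c' M with hcdef
    rcases h {y : G | L y ≤ c} (hgen' c (le_max_right _ _)) with hcomp | ⟨n, hn⟩
    · refine hcomp.of_isClosed_subset isClosed_closure ?_
      refine closure_mono fun x hx => ?_
      simp only [Set.mem_setOf_eq] at hx ⊢
      exact le_trans hx (le_max_left _ _)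
    · exfalso
      apply hb
      refine ⟨n * c + c, fun x => ?_⟩
      have hx : x ∈ {y : G | L y ≤ c} ^ n := by rw [hn]; trivial
      exact powbound c (le_trans hM1 (le_max_right _ _)) n x hx
end

section
/- Let G be a locally compact group and K a compact normal subgroup of G. Then G has Property PL if and only if the quotient group G/K has Property PL. -/
open scoped NNReal Topology

open scoped Pointwise

section Aux

open Set QuotientGroup

variable {G : Type*} [Group G] [TopologicalSpace G] [IsTopologicalGroup G]

/-- Every compact subset of the quotient lifts to a compact subset. -/
lemma aux_lift_compact [LocallyCompactSpace G] (N : Subgroup G) {Q : Set (G ⧸ N)}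
    (hQ : IsCompact Q) :
    ∃ C : Set G, IsCompact C ∧ Q ⊆ (fun x : G => ((x : G ⧸ N))) '' C := by
  have h : ∀ x : G, ∃ C : Set G, IsCompact C ∧ C ∈ 𝓝 x := fun x => exists_compact_mem_nhds x
  choose C hCc hCn using h
  have h2 : ∀ x : G, ∃ U : Set G, U ⊆ C x ∧ IsOpen U ∧ x ∈ U := by
    intro x; exact mem_nhds_iff.1 (hCn x)
  choose U hUC hUo hxU using h2
  have hcov : Q ⊆ ⋃ x : G, (fun z : G => ((z : G ⧸ N))) '' U x := by
    intro y _
    obtain ⟨x, rfl⟩ := QuotientGroup.mk_surjective y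
    exact mem_iUnion.2 ⟨x, ⟨x, hxU x, rfl⟩⟩
  obtain ⟨t, ht⟩ := hQ.elim_finite_subcover _
    (fun x => QuotientGroup.isOpenMap_coe _ (hUo x)) hcov
  refine ⟨⋃ x ∈ t, C x, t.finite_toSet.isCompact_biUnion fun x _ => hCc x, ?_⟩
  intro y hy
  obtain ⟨x, hxt, z, hz, rfl⟩ := by
    simpa using ht hy
  exact ⟨z, mem_biUnion hxt (hUC x hz), rfl⟩

end Aux

/-- for a compact normal subgroup `K` of a locally compact group `G`,
`G` has Property PL iff `G/K` has Property PL. -/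
theorem stmt_5 {G : Type*} [Group G] [TopologicalSpace G] [IsTopologicalGroup G]
    [LocallyCompactSpace G] (N : Subgroup G) [N.Normal] (hN : IsCompact (N : Set G)) :
    HasPL G ↔ HasPL (G ⧸ N) := by
  set π : G → G ⧸ N := fun x => (x : G ⧸ N) with hπ
  have hπc : Continuous π := QuotientGroup.continuous_mk
  have hπs : Function.Surjective π := QuotientGroup.mk_surjective
  constructor
  · -- G has PL → G/N has PL
    intro hG L hL
    obtain ⟨⟨h0, hbdd, hsub⟩, hsym⟩ := hL
    have hL' : IsLength (L ∘ π) := by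
      refine ⟨⟨fun x => h0 _, ?_, ?_⟩, ?_⟩
      · intro K hK
        obtain ⟨M, hM⟩ := hbdd (π '' K) (hK.image hπc)
        exact ⟨M, fun x hx => hM _ ⟨x, hx, rfl⟩⟩
      · intro x y
        show L (π (x * y)) ≤ L (π x) + L (π y)
        have : π (x * y) = π x * π y := rfl
        rw [this]; exact hsub _ _
      · intro x; exact hsym _
    rcases hG _ hL' with ⟨M, hM⟩ | hprop
    · left
      exact ⟨M, fun y => by obtain ⟨x, rfl⟩ := hπs y; exact hM x⟩
    · right
      intro c
      have hS : IsCompact (closure {x : G | L (π x) ≤ c}) := hprop c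
      have himg : IsCompact (π '' closure {x : G | L (π x) ≤ c}) := hS.image hπc
      have hsubset : {y : G ⧸ N | L y ≤ c} ⊆ π '' closure {x : G | L (π x) ≤ c} := by
        intro y hy
        obtain ⟨x, rfl⟩ := hπs y
        exact ⟨x, subset_closure hy, rfl⟩
      exact himg.closure_of_subset hsubset
  · -- G/N has PL → G has PL
    intro hQ L hL
    obtain ⟨⟨h0, hbdd, hsub⟩, hsym⟩ := hL
    obtain ⟨MN, hMN⟩ := hbdd (N : Set G) hN
    set Lb : G ⧸ N → ℝ := fun y => sInf (L '' (π ⁻¹' {y})) with hLb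
    have hne : ∀ y : G ⧸ N, (L '' (π ⁻¹' {y})).Nonempty := by
      intro y; obtain ⟨x, rfl⟩ := hπs y; exact ⟨L x, x, rfl, rfl⟩
    have hbb : ∀ y : G ⧸ N, BddBelow (L '' (π ⁻¹' {y})) := by
      rintro y; exact ⟨0, by rintro r ⟨x, -, rfl⟩; exact h0 x⟩
    have hLb_le : ∀ x : G, Lb (π x) ≤ L x := fun x => csInf_le (hbb _) ⟨x, rfl, rfl⟩
    have hfib : ∀ {x : G} {y : G ⧸ N}, x ∈ π ⁻¹' {y} → π x = y := by
      intro x y hx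
      rwa [Set.mem_preimage, Set.mem_singleton_iff] at hx
    have hLbL : IsLength Lb := by
      refine ⟨⟨?_, ?_, ?_⟩, ?_⟩
      · intro y
        exact le_csInf (hne y) (by rintro r ⟨x, -, rfl⟩; exact h0 x)
      · intro K hK
        obtain ⟨C, hCc, hCK⟩ := aux_lift_compact N hK
        obtain ⟨M, hM⟩ := hbdd C hCc
        refine ⟨M, fun y hy => ?_⟩
        obtain ⟨x, hxC, rfl⟩ := hCK hy
        exact (hLb_le x).trans (hM x hxC)
      · intro y z
        have key : ∀ x₁ x₂ : G, π x₁ = y → π x₂ = z → Lb (y * z) ≤ L x₁ + L x₂ := by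
          intro x₁ x₂ h₁ h₂
          have hx : π (x₁ * x₂) = y * z := by
            show (π x₁) * (π x₂) = y * z
            rw [h₁, h₂]
          have h3 : Lb (y * z) ≤ L (x₁ * x₂) :=
            csInf_le (hbb _) ⟨x₁ * x₂, by simp [Set.mem_preimage, hx], rfl⟩
          exact h3.trans (hsub x₁ x₂)
        have h1 : Lb (y * z) - Lb z ≤ Lb y := by
          apply le_csInf (hne y)
          rintro r ⟨x₁, hx₁, rfl⟩
          have h2 : Lb (y * z) - L x₁ ≤ Lb z := by
            apply le_csInf (hne z)
            rintro s ⟨x₂, hx₂, rfl⟩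
            have := key x₁ x₂ (hfib hx₁) (hfib hx₂)
            linarith
          linarith
        linarith
      · have hsymb : ∀ y : G ⧸ N, Lb y⁻¹ ≤ Lb y := by
          intro y
          apply le_csInf (hne y)
          rintro r ⟨x, hx, rfl⟩
          have hxi : π x⁻¹ = y⁻¹ := by
            show (π x)⁻¹ = y⁻¹
            rw [hfib hx]
          have : Lb y⁻¹ ≤ L x⁻¹ :=
            csInf_le (hbb _) ⟨x⁻¹, by simp [Set.mem_preimage, hxi], rfl⟩
          rw [← hsym x] at this
          exact this
        intro y
        refine le_antisymm ?_ (hsymb y)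
        simpa using hsymb y⁻¹
    rcases hQ Lb hLbL with ⟨M, hM⟩ | hP
    · left
      refine ⟨M + 1 + MN, fun x => ?_⟩
      have h1 : Lb (π x) < M + 1 := lt_of_le_of_lt (hM _) (by linarith)
      obtain ⟨r, ⟨z, hz, rfl⟩, hr⟩ := exists_lt_of_csInf_lt (hne (π x)) h1
      have hzn : z⁻¹ * x ∈ N := by
        have := hfib hz
        exact QuotientGroup.eq.mp this
      have hx : x = z * (z⁻¹ * x) := by group
      have h2 : L x ≤ L z + L (z⁻¹ * x) := by
        nth_rewrite 1 [hx]; exact hsub _ _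
      have h3 := hMN _ hzn
      linarith
    · right
      intro c
      have hSc : IsCompact (closure {y : G ⧸ N | Lb y ≤ c}) := hP c
      obtain ⟨C, hCc, hCS⟩ := aux_lift_compact N hSc
      have hsub1 : {x : G | L x ≤ c} ⊆ π ⁻¹' closure {y : G ⧸ N | Lb y ≤ c} := by
        intro x hx
        exact subset_closure (le_trans (hLb_le x) hx)
      have hclosed : IsClosed (π ⁻¹' closure {y : G ⧸ N | Lb y ≤ c}) :=
        isClosed_closure.preimage hπc
      have hsub2 : π ⁻¹' closure {y : G ⧸ N | Lb y ≤ c} ⊆ C * (N : Set G) := by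
        intro x hx
        obtain ⟨z, hzC, hz⟩ := hCS hx
        have hzn : z⁻¹ * x ∈ N := QuotientGroup.eq.mp hz
        have hx2 : x = z * (z⁻¹ * x) := by group
        rw [hx2]
        exact Set.mul_mem_mul hzC hzn
      exact (hCc.mul hN).of_isClosed_subset isClosed_closure
        ((closure_minimal hsub1 hclosed).trans hsub2)
end

section
/- Let G be a locally compact group and suppose G has three closed subsets K, K', D with K and K' compact and G = K·D·K' (every element of G is a product k·d·k' with k ∈ K, d ∈ D, k' ∈ K'). Let L be a length on G. Then: (a) L is bounded on G if and only if the restriction of L to D is bounded; (b) L is proper on G if and only if for every n, the set {d ∈ D : L(d) ≤ n} has compact closure. -/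
open scoped NNReal Topology Pointwise

/-- if `G = K·D·K'` with `K, K'` compact and `K, K', D` closed, then a
length on `G` is bounded (resp. proper) iff its restriction to `D` is so. -/
theorem stmt_6 {G : Type*} [Group G] [TopologicalSpace G] [IsTopologicalGroup G]
    [LocallyCompactSpace G] (K K' D : Set G)
    (hKcl : IsClosed K) (hK'cl : IsClosed K') (hDcl : IsClosed D)
    (hK : IsCompact K) (hK' : IsCompact K')
    (hdec : ∀ g : G, ∃ k ∈ K, ∃ d ∈ D, ∃ k' ∈ K', g = k * d * k')
    (L : G → ℝ) (hL : IsLength L) :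
    ((∃ M : ℝ, ∀ g : G, L g ≤ M) ↔ (∃ M : ℝ, ∀ d ∈ D, L d ≤ M)) ∧
      (IsProperLength L ↔ ∀ c : ℝ, IsCompact (closure {d ∈ D | L d ≤ c})) := by
  obtain ⟨⟨hpos, hbdd, hsub⟩, hsymm⟩ := hL
  obtain ⟨MK, hMK⟩ := hbdd K hK
  obtain ⟨MK', hMK'⟩ := hbdd K' hK'
  -- key estimate: if g = k*d*k' then L d ≤ L g + MK + MK'
  have key : ∀ g : G, ∀ k ∈ K, ∀ d : G, ∀ k' ∈ K', g = k * d * k' →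
      L d ≤ L g + MK + MK' := by
    intro g k hk d k' hk' hg
    have hd : d = k⁻¹ * g * k'⁻¹ := by subst hg; group
    calc L d = L (k⁻¹ * g * k'⁻¹) := by rw [hd]
      _ ≤ L (k⁻¹ * g) + L k'⁻¹ := hsub _ _
      _ ≤ L k⁻¹ + L g + L k'⁻¹ := by linarith [hsub k⁻¹ g]
      _ ≤ L g + MK + MK' := by
          have h1 : L k⁻¹ ≤ MK := by rw [← hsymm k]; exact hMK k hk
          have h2 : L k'⁻¹ ≤ MK' := by rw [← hsymm k']; exact hMK' k' hk'
          linarith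
  constructor
  · constructor
    · rintro ⟨M, hM⟩; exact ⟨M, fun d _ => hM d⟩
    · rintro ⟨M, hM⟩
      refine ⟨MK + M + MK', fun g => ?_⟩
      obtain ⟨k, hk, d, hd, k', hk', hg⟩ := hdec g
      calc L g = L (k * d * k') := by rw [hg]
        _ ≤ L (k * d) + L k' := hsub _ _
        _ ≤ L k + L d + L k' := by linarith [hsub k d]
        _ ≤ MK + M + MK' := by
            linarith [hMK k hk, hM d hd, hMK' k' hk']
  · constructor
    · intro hp c
      refine (hp c).of_isClosed_subset isClosed_closure
        (closure_mono fun d hd => hd.2)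
    · intro h c
      have hS := h (c + MK + MK')
      have hcpt : IsCompact (K * closure {d ∈ D | L d ≤ c + MK + MK'} * K') :=
        (hK.mul hS).mul hK'
      refine hcpt.closure.of_isClosed_subset isClosed_closure
        (closure_mono ?_)
      intro g hg
      obtain ⟨k, hk, d, hd, k', hk', hgd⟩ := hdec g
      have : L d ≤ c + MK + MK' := by
        have := key g k hk d k' hk' hgd
        have hgc : L g ≤ c := hg; linarith
      exact ⟨k * d, ⟨k, hk, d, subset_closure ⟨hd, this⟩, rfl⟩, k', hk', hgd.symm⟩
end

section
/- Let G be a locally compact group and H a closed cocompact subgroup of G (i.e. there is a compact subset C of G with G = H·C). If H has Property PL, then G has Property PL; likewise, if H has strong Property PL, then G has strong Property PL. -/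
open scoped NNReal Topology

open scoped Pointwise

/-- The restriction of a semigroup length to a subgroup is a semigroup length. -/
lemma stmt7_restrict_semigroupLength {G : Type*} [Group G] [TopologicalSpace G]
    (H : Subgroup G) {L : G → ℝ} (hL : IsSemigroupLength L) :
    IsSemigroupLength (fun h : H => L (h : G)) := by
  obtain ⟨h0, hb, hsub⟩ := hL
  refine ⟨fun x => h0 _, fun K hK => ?_, fun x y => hsub _ _⟩
  obtain ⟨M, hM⟩ := hb (Subtype.val '' K) (hK.image continuous_subtype_val)
  exact ⟨M, fun x hx => hM _ ⟨x, hx, rfl⟩⟩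

/-- Key step: if the restriction of a semigroup length to a cocompact subgroup is
bounded or proper, then the length itself is bounded or proper. -/
lemma stmt7_key {G : Type*} [Group G] [TopologicalSpace G] [IsTopologicalGroup G]
    (H : Subgroup G)
    (hco : ∃ C : Set G, IsCompact C ∧ ∀ g : G, ∃ h ∈ H, ∃ c ∈ C, g = h * c)
    {L : G → ℝ} (hL : IsSemigroupLength L)
    (hd : (∃ M : ℝ, ∀ x : H, L (x : G) ≤ M) ∨ IsProperLength (fun h : H => L (h : G))) :
    (∃ M : ℝ, ∀ x, L x ≤ M) ∨ IsProperLength L := by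
  obtain ⟨C, hC, hcov⟩ := hco
  obtain ⟨h0, hb, hsub⟩ := hL
  rcases hd with ⟨M, hM⟩ | hprop
  · left
    obtain ⟨M', hM'⟩ := hb C hC
    refine ⟨M + M', fun g => ?_⟩
    obtain ⟨h, hh, c, hc, rfl⟩ := hcov g
    exact (hsub h c).trans (add_le_add (hM ⟨h, hh⟩) (hM' c hc))
  · right
    intro c
    obtain ⟨M', hM'⟩ := hb C⁻¹ hC.inv
    have hKcpt : IsCompact (Subtype.val '' closure {x : H | L (x : G) ≤ c + M'}) :=
      (hprop (c + M')).image continuous_subtype_val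
    have hsubset : {x : G | L x ≤ c} ⊆
        (Subtype.val '' closure {x : H | L (x : G) ≤ c + M'}) * C := by
      intro g hg
      obtain ⟨h, hh, c0, hc0, rfl⟩ := hcov g
      have hLh : L h ≤ c + M' := by
        have : L h ≤ L (h * c0) + L c0⁻¹ := by
          have := hsub (h * c0) c0⁻¹
          simpa using this
        exact this.trans (add_le_add hg (hM' c0⁻¹ (Set.inv_mem_inv.mpr hc0)))
      exact Set.mul_mem_mul ⟨⟨h, hh⟩, subset_closure hLh, rfl⟩ hc0
    have : IsCompact (closure ((Subtype.val '' closure {x : H | L (x : G) ≤ c + M'}) * C)) :=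
      (hKcpt.mul hC).closure
    exact this.of_isClosed_subset isClosed_closure (closure_mono hsubset)

/-- if a closed cocompact subgroup `H` of a locally compact group `G`
has (strong) Property PL, then so does `G`. -/
theorem stmt_7 {G : Type*} [Group G] [TopologicalSpace G] [IsTopologicalGroup G]
    [LocallyCompactSpace G] (H : Subgroup G) (hHcl : IsClosed (H : Set G))
    (hco : ∃ C : Set G, IsCompact C ∧ ∀ g : G, ∃ h ∈ H, ∃ c ∈ C, g = h * c) :
    (HasPL H → HasPL G) ∧ (HasStrongPL H → HasStrongPL G) := by
  constructor
  · intro hH L hL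
    refine stmt7_key H hco hL.1 ?_
    exact hH (fun h : H => L (h : G))
      ⟨stmt7_restrict_semigroupLength H hL.1, fun x => by simpa using hL.2 (x : G)⟩
  · intro hH L hL
    exact stmt7_key H hco hL
      (hH (fun h : H => L (h : G)) (stmt7_restrict_semigroupLength H hL))
end

section
/- Let n ≥ 2 and let G be the group of surjective isometries of the Euclidean space ℝⁿ (with composition as group law). Let L : G → [0,∞) be subadditive (L(g∘h) ≤ L(g) + L(h) for all g,h ∈ G) and locally bounded in the sense that for every r > 0, L is bounded on the set {g ∈ G : ‖g(0)‖ ≤ r}. Then either L is bounded on G, or L is proper in the sense that for every n there exists r with {g ∈ G : L(g) ≤ n} ⊆ {g ∈ G : ‖g(0)‖ ≤ r}. -/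
open Submodule RealInnerProductSpace

local notation "E" n => EuclideanSpace ℝ (Fin n)

lemma exists_unit_orthogonal (n : ℕ) (hn : 2 ≤ n) (v : EuclideanSpace ℝ (Fin n)) :
    ∃ w : EuclideanSpace ℝ (Fin n), ‖w‖ = 1 ∧ (inner ℝ v w : ℝ) = 0 := by
  have hbot : (ℝ ∙ v)ᗮ ≠ ⊥ := by
    intro hb
    have htop : (ℝ ∙ v) = ⊤ := Submodule.orthogonal_eq_bot_iff.mp hb
    have h1 : Module.finrank ℝ (ℝ ∙ v) ≤ 1 := by
      have := finrank_span_le_card (R := ℝ) ({v} : Set (EuclideanSpace ℝ (Fin n)))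
      simpa using this
    rw [htop, finrank_top] at h1
    rw [finrank_euclideanSpace_fin] at h1
    omega
  obtain ⟨w, hwmem, hw0⟩ := Submodule.exists_mem_ne_zero_of_ne_bot hbot
  refine ⟨‖w‖⁻¹ • w, ?_, ?_⟩
  · rw [norm_smul, norm_inv, norm_norm, inv_mul_cancel₀ (norm_ne_zero_iff.mpr hw0)]
  · rw [inner_smul_right]
    have := Submodule.mem_orthogonal_singleton_iff_inner_right.mp hwmem
    rw [this, mul_zero]

lemma exists_sphere_point (n : ℕ) (hn : 2 ≤ n) (v : EuclideanSpace ℝ (Fin n)) (s : ℝ)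
    (hs : 0 ≤ s) (hvs : ‖v‖ ≤ 2 * s) :
    ∃ x : EuclideanSpace ℝ (Fin n), ‖x‖ = s ∧ ‖v - x‖ = s := by
  obtain ⟨w, hw1, hwv⟩ := exists_unit_orthogonal n hn v
  set t : ℝ := Real.sqrt (s ^ 2 - ‖v‖ ^ 2 / 4) with ht
  have htnn : 0 ≤ s ^ 2 - ‖v‖ ^ 2 / 4 := by nlinarith [norm_nonneg v]
  have ht2 : t ^ 2 = s ^ 2 - ‖v‖ ^ 2 / 4 := Real.sq_sqrt htnn
  refine ⟨(1 / 2 : ℝ) • v + t • w, ?_, ?_⟩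
  · have : (inner ℝ ((1 / 2 : ℝ) • v) (t • w) : ℝ) = 0 := by
      rw [inner_smul_left, inner_smul_right, hwv]; ring
    have hsq := norm_add_sq_real ((1 / 2 : ℝ) • v) (t • w)
    rw [this] at hsq
    have hnorm : ‖(1 / 2 : ℝ) • v + t • w‖ ^ 2 = s ^ 2 := by
      rw [hsq, norm_smul, norm_smul, hw1]
      simp only [Real.norm_eq_abs]
      rw [mul_pow, mul_pow]
      rw [sq_abs, sq_abs]
      nlinarith
    nlinarith [norm_nonneg ((1 / 2 : ℝ) • v + t • w)]
  · have hveq : v - ((1 / 2 : ℝ) • v + t • w) = (1 / 2 : ℝ) • v - t • w := by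
      module
    rw [hveq]
    have : (inner ℝ ((1 / 2 : ℝ) • v) (t • w) : ℝ) = 0 := by
      rw [inner_smul_left, inner_smul_right, hwv]; ring
    have hsq := norm_sub_sq_real ((1 / 2 : ℝ) • v) (t • w)
    rw [this] at hsq
    have hnorm : ‖(1 / 2 : ℝ) • v - t • w‖ ^ 2 = s ^ 2 := by
      rw [hsq, norm_smul, norm_smul, hw1]
      simp only [Real.norm_eq_abs]
      rw [mul_pow, mul_pow, sq_abs, sq_abs]
      nlinarith
    nlinarith [norm_nonneg ((1 / 2 : ℝ) • v - t • w)]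

lemma exists_rot (n : ℕ) (a b : EuclideanSpace ℝ (Fin n)) (hab : ‖a‖ = ‖b‖) :
    ∃ k : (EuclideanSpace ℝ (Fin n)) ≃ᵢ (EuclideanSpace ℝ (Fin n)), k 0 = 0 ∧ k a = b := by
  refine ⟨(reflection (ℝ ∙ (a - b))ᗮ).toIsometryEquiv, ?_, ?_⟩
  · simp
  · exact reflection_sub hab

/-- any subadditive, locally bounded function on the group of surjective
isometries of Euclidean `ℝⁿ` (`n ≥ 2`) is either bounded or proper. -/
theorem stmt_8 (n : ℕ) (hn : 2 ≤ n)
    (L : (EuclideanSpace ℝ (Fin n) ≃ᵢ EuclideanSpace ℝ (Fin n)) → ℝ)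
    (hnonneg : ∀ g, 0 ≤ L g)
    (hsub : ∀ g h, L (g * h) ≤ L g + L h)
    (hloc : ∀ r : ℝ, 0 < r → ∃ M : ℝ, ∀ g, ‖g 0‖ ≤ r → L g ≤ M) :
    (∃ M : ℝ, ∀ g, L g ≤ M) ∨
      ∀ c : ℝ, ∃ r : ℝ, ∀ g, L g ≤ c → ‖g 0‖ ≤ r := by
  by_cases H : ∀ c : ℝ, ∃ r : ℝ, ∀ g, L g ≤ c → ‖g 0‖ ≤ r
  · exact Or.inr H
  push_neg at H
  obtain ⟨c, hc⟩ := H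
  left
  obtain ⟨M₁, hM₁⟩ := hloc 1 one_pos
  refine ⟨(M₁ + (M₁ + c)) + (M₁ + c), fun h => ?_⟩
  set v : EuclideanSpace ℝ (Fin n) := h 0 with hv
  obtain ⟨g, hgL, hgs⟩ := hc (max 1 (‖v‖ / 2))
  set s : ℝ := ‖g 0‖ with hsdef
  have hs0 : (0:ℝ) ≤ s := norm_nonneg _
  have hvs : ‖v‖ ≤ 2 * s := by
    have : ‖v‖ / 2 ≤ max 1 (‖v‖ / 2) := le_max_right _ _
    linarith [le_of_lt hgs]
  -- L of g bounded by c, L of rotations bounded by M₁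
  have hLrot : ∀ k : (EuclideanSpace ℝ (Fin n) ≃ᵢ EuclideanSpace ℝ (Fin n)),
      k 0 = 0 → L k ≤ M₁ := by
    intro k hk
    apply hM₁
    rw [hk]; simp
  obtain ⟨x, hx1, hx2⟩ := exists_sphere_point n hn v s hs0 hvs
  obtain ⟨k₁, hk₁0, hk₁a⟩ := exists_rot n (g 0) x (by rw [hx1])
  set u := k₁ * g with hu
  have hu0 : u 0 = x := by rw [hu, IsometryEquiv.mul_apply, hk₁a]
  have hLu : L u ≤ M₁ + c := le_trans (hsub k₁ g) (add_le_add (hLrot k₁ hk₁0) hgL)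
  set p : EuclideanSpace ℝ (Fin n) := u.symm v with hp
  have hpnorm : ‖p‖ = s := by
    have : dist p 0 = dist v (u 0) := by
      rw [hp, ← IsometryEquiv.dist_eq u, IsometryEquiv.apply_symm_apply]
    rw [dist_eq_norm, dist_eq_norm, hu0, sub_zero] at this
    rw [this, hx2]
  obtain ⟨k₂, hk₂0, hk₂a⟩ := exists_rot n (g 0) p (by rw [hpnorm])
  set u' := k₂ * g with hu'
  have hu'0 : u' 0 = p := by rw [hu', IsometryEquiv.mul_apply, hk₂a]
  have hLu' : L u' ≤ M₁ + c := le_trans (hsub k₂ g) (add_le_add (hLrot k₂ hk₂0) hgL)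
  set w := u * u' with hw
  have hw0 : w 0 = v := by
    rw [hw, IsometryEquiv.mul_apply, hu'0, hp, IsometryEquiv.apply_symm_apply]
  have hdec : h = w * (w⁻¹ * h) := by group
  have hrem : (w⁻¹ * h) 0 = 0 := by
    rw [IsometryEquiv.mul_apply]
    have : w⁻¹ = w.symm := rfl
    rw [this, ← hv, ← hw0, IsometryEquiv.symm_apply_apply]
  have hLrem : L (w⁻¹ * h) ≤ M₁ := hLrot _ hrem
  have hLw : L w ≤ (M₁ + c) + (M₁ + c) := le_trans (hsub u u') (add_le_add hLu hLu')
  calc L h = L (w * (w⁻¹ * h)) := by rw [← hdec]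
    _ ≤ L w + L (w⁻¹ * h) := hsub _ _
    _ ≤ ((M₁ + c) + (M₁ + c)) + M₁ := add_le_add hLw hLrem
    _ ≤ (M₁ + (M₁ + c)) + (M₁ + c) := by linarith
end

section
/- Let n ≥ 2 and let L : ℝⁿ → [0,∞) (ℝⁿ with its Euclidean norm) be a function such that: L(x + y) ≤ L(x) + L(y) for all x, y; L(x) depends only on ‖x‖ (i.e. L(x) = L(y) whenever ‖x‖ = ‖y‖); L is bounded on every bounded subset of ℝⁿ; and there exists a sequence (aᵢ) in ℝⁿ with ‖aᵢ‖ → ∞ and sup_i L(aᵢ) < ∞. Then L is bounded on ℝⁿ. -/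
open Real RealInnerProductSpace

lemma aux_orth (n : ℕ) (hn : 2 ≤ n) (x : EuclideanSpace ℝ (Fin n)) :
    ∃ w : EuclideanSpace ℝ (Fin n), ‖w‖ = 1 ∧ (inner ℝ x w : ℝ) = 0 := by
  have hfin : Module.finrank ℝ (EuclideanSpace ℝ (Fin n)) = n := by simp
  have h1 := Submodule.finrank_add_finrank_orthogonal (K := ℝ ∙ x)
  rw [hfin] at h1
  have hK : Module.finrank ℝ (ℝ ∙ x) ≤ 1 := by
    rcases eq_or_ne x 0 with h | h
    · subst h
      rw [Submodule.span_zero_singleton, finrank_bot]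
      omega
    · rw [finrank_span_singleton h]
  have h2 : 0 < Module.finrank ℝ (ℝ ∙ x)ᗮ := by omega
  have hne : ((ℝ ∙ x)ᗮ : Submodule ℝ (EuclideanSpace ℝ (Fin n))) ≠ ⊥ := by
    intro h; rw [h, finrank_bot] at h2; omega
  obtain ⟨w, hwK, hw0⟩ := Submodule.exists_mem_ne_zero_of_ne_bot hne
  refine ⟨‖w‖⁻¹ • w, ?_, ?_⟩
  · rw [norm_smul, norm_inv, norm_norm, inv_mul_cancel₀ (norm_ne_zero_iff.2 hw0)]
  · have := (Submodule.mem_orthogonal _ w).1 hwK x (Submodule.mem_span_singleton_self x)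
    rw [real_inner_smul_right, this, mul_zero]

lemma aux_sum (n : ℕ) (hn : 2 ≤ n) (x : EuclideanSpace ℝ (Fin n)) {r : ℝ}
    (hr : 0 < r) (hx : ‖x‖ ≤ r) :
    ∃ u v : EuclideanSpace ℝ (Fin n), u + v = x ∧ ‖u‖ = r ∧ ‖v‖ = r := by
  obtain ⟨w, hw1, hwx⟩ := aux_orth n hn x
  set t : ℝ := Real.sqrt (r ^ 2 - ‖x‖ ^ 2 / 4) with ht
  have hnn : 0 ≤ r ^ 2 - ‖x‖ ^ 2 / 4 := by
    have : ‖x‖ ^ 2 ≤ r ^ 2 := by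
      apply pow_le_pow_left₀ (norm_nonneg x) hx
    nlinarith
  have ht2 : t ^ 2 = r ^ 2 - ‖x‖ ^ 2 / 4 := Real.sq_sqrt hnn
  refine ⟨(1/2 : ℝ) • x + t • w, (1/2 : ℝ) • x - t • w, by module, ?_, ?_⟩
  · have : ‖(1/2 : ℝ) • x + t • w‖ ^ 2 = r ^ 2 := by
      rw [norm_add_sq_real, real_inner_smul_left, real_inner_smul_right, hwx,
        norm_smul, norm_smul, hw1]
      simp only [mul_zero, mul_one, Real.norm_eq_abs, sq_abs]
      rw [ht2]
      have h12 : |(1:ℝ)/2| = 1/2 := by norm_num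
      rw [h12]; ring
    calc ‖(1/2 : ℝ) • x + t • w‖ = Real.sqrt (‖(1/2 : ℝ) • x + t • w‖ ^ 2) :=
          (Real.sqrt_sq (norm_nonneg _)).symm
      _ = Real.sqrt (r ^ 2) := by rw [this]
      _ = r := Real.sqrt_sq hr.le
  · have : ‖(1/2 : ℝ) • x - t • w‖ ^ 2 = r ^ 2 := by
      rw [norm_sub_sq_real, real_inner_smul_left, real_inner_smul_right, hwx,
        norm_smul, norm_smul, hw1]
      simp only [mul_zero, mul_one, Real.norm_eq_abs, sq_abs]
      rw [ht2]
      have h12 : |(1:ℝ)/2| = 1/2 := by norm_num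
      rw [h12]; ring
    calc ‖(1/2 : ℝ) • x - t • w‖ = Real.sqrt (‖(1/2 : ℝ) • x - t • w‖ ^ 2) :=
          (Real.sqrt_sq (norm_nonneg _)).symm
      _ = Real.sqrt (r ^ 2) := by rw [this]
      _ = r := Real.sqrt_sq hr.le

/-- a subadditive, rotation-invariant, locally bounded function on
Euclidean `ℝⁿ` (`n ≥ 2`) which is bounded along some sequence going to infinity
is bounded. -/
theorem stmt_9 (n : ℕ) (hn : 2 ≤ n) (L : EuclideanSpace ℝ (Fin n) → ℝ)
    (hnonneg : ∀ x, 0 ≤ L x)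
    (hsub : ∀ x y, L (x + y) ≤ L x + L y)
    (hrot : ∀ x y, ‖x‖ = ‖y‖ → L x = L y)
    (hbdd : ∀ B : Set (EuclideanSpace ℝ (Fin n)), Bornology.IsBounded B →
      ∃ M : ℝ, ∀ x ∈ B, L x ≤ M)
    (a : ℕ → EuclideanSpace ℝ (Fin n))
    (ha : Filter.Tendsto (fun i => ‖a i‖) Filter.atTop Filter.atTop)
    (hLa : ∃ M : ℝ, ∀ i, L (a i) ≤ M) :
    ∃ M : ℝ, ∀ x, L x ≤ M := by
  obtain ⟨M, hM⟩ := hLa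
  refine ⟨2 * M, fun x => ?_⟩
  obtain ⟨i, hi⟩ := (ha.eventually_ge_atTop (max ‖x‖ 1)).exists
  have hr : 0 < ‖a i‖ := lt_of_lt_of_le one_pos ((le_max_right _ _).trans hi)
  obtain ⟨u, v, huv, hu, hv⟩ := aux_sum n hn x hr ((le_max_left _ _).trans hi)
  have hLu : L u = L (a i) := hrot u (a i) hu
  have hLv : L v = L (a i) := hrot v (a i) hv
  calc L x = L (u + v) := by rw [huv]
    _ ≤ L u + L v := hsub u v
    _ = 2 * L (a i) := by rw [hLu, hLv]; ring
    _ ≤ 2 * M := by linarith [hM i]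
end

section
/- Let G be the subgroup of GL(2, ℝ) consisting of matrices of the form [[a, b], [0, 1]] with a ∈ ℝ, a ≠ 0, b ∈ ℝ (the affine group of the real line), with its topology as a subgroup of GL(2, ℝ). Let D ≤ G be the subgroup of matrices [[a, 0], [0, 1]] (a ≠ 0) and U ≤ G the subgroup of matrices [[1, b], [0, 1]]. Let L be a length on G. If L is not proper on D, i.e. there exists n such that {d ∈ D : L(d) ≤ n} does not have compact closure, then L is bounded on U. -/
open scoped NNReal Topology

/-- The affine group of the real line, realized as the subgroup of `GL(2, ℝ)`
consisting of the matrices `[[a, b], [0, 1]]` (with `a ≠ 0` automatic from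
invertibility). -/
def affineGroupR : Subgroup (GL (Fin 2) ℝ) where
  carrier := {g | (g : Matrix (Fin 2) (Fin 2) ℝ) 1 0 = 0 ∧
    (g : Matrix (Fin 2) (Fin 2) ℝ) 1 1 = 1}
  one_mem' := by
    constructor <;> simp [Matrix.one_apply]
  mul_mem' := by
    rintro a b ⟨ha0, ha1⟩ ⟨hb0, hb1⟩
    constructor <;>
      simp [Units.val_mul, Matrix.mul_apply, Fin.sum_univ_two, ha0, ha1, hb0, hb1]
  inv_mem' := by
    rintro g ⟨h0, h1⟩
    have hmul : ((g : Matrix (Fin 2) (Fin 2) ℝ) *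
        ((g⁻¹ : GL (Fin 2) ℝ) : Matrix (Fin 2) (Fin 2) ℝ)) = 1 := by
      rw [← Units.val_mul, mul_inv_cancel, Units.val_one]
    constructor
    · have := congrFun (congrFun hmul 1) 0
      simpa [Matrix.mul_apply, Fin.sum_univ_two, h0, h1, Matrix.one_apply] using this
    · have := congrFun (congrFun hmul 1) 1
      simpa [Matrix.mul_apply, Fin.sum_univ_two, h0, h1, Matrix.one_apply] using this


section AuxStmt12
open Matrix

noncomputable def uUnit (b : ℝ) : GL (Fin 2) ℝ :=
  ⟨!![1, b; 0, 1], !![1, -b; 0, 1],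
    by rw [Matrix.mul_fin_two]; norm_num; exact Matrix.one_fin_two.symm,
    by rw [Matrix.mul_fin_two]; norm_num; exact Matrix.one_fin_two.symm⟩

noncomputable def dUnit (a : ℝˣ) : GL (Fin 2) ℝ :=
  ⟨!![(a : ℝ), 0; 0, 1], !![((a : ℝ))⁻¹, 0; 0, 1],
    by rw [Matrix.mul_fin_two]; simp [mul_inv_cancel₀ a.ne_zero]; exact Matrix.one_fin_two.symm,
    by rw [Matrix.mul_fin_two]; simp [inv_mul_cancel₀ a.ne_zero]; exact Matrix.one_fin_two.symm⟩

noncomputable def uG (b : ℝ) : affineGroupR :=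
  ⟨uUnit b, by constructor <;> simp [uUnit]⟩

noncomputable def dG (a : ℝˣ) : affineGroupR :=
  ⟨dUnit a, by constructor <;> simp [dUnit]⟩

lemma aff_ext {g h : affineGroupR}
    (H : ((g : GL (Fin 2) ℝ) : Matrix (Fin 2) (Fin 2) ℝ)
       = ((h : GL (Fin 2) ℝ) : Matrix (Fin 2) (Fin 2) ℝ)) : g = h :=
  Subtype.ext (Units.ext H)

lemma aff_entries (g : affineGroupR) :
    ((g : GL (Fin 2) ℝ) : Matrix (Fin 2) (Fin 2) ℝ) =
      !![((g : GL (Fin 2) ℝ) : Matrix (Fin 2) (Fin 2) ℝ) 0 0,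
         ((g : GL (Fin 2) ℝ) : Matrix (Fin 2) (Fin 2) ℝ) 0 1; 0, 1] := by
  have h0 := g.2.1
  have h1 := g.2.2
  ext i j
  fin_cases i <;> fin_cases j <;> simp [h0, h1]

lemma aff_00_ne (g : affineGroupR) :
    ((g : GL (Fin 2) ℝ) : Matrix (Fin 2) (Fin 2) ℝ) 0 0 ≠ 0 := by
  have hu : IsUnit ((g : GL (Fin 2) ℝ) : Matrix (Fin 2) (Fin 2) ℝ) := (g : GL (Fin 2) ℝ).isUnit
  have hd : IsUnit (((g : GL (Fin 2) ℝ) : Matrix (Fin 2) (Fin 2) ℝ)).det :=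
    (Matrix.isUnit_iff_isUnit_det _).1 hu
  rw [Matrix.det_fin_two, g.2.1, g.2.2] at hd
  simpa using isUnit_iff_ne_zero.1 hd

lemma eq_uG (g : affineGroupR)
    (h : ((g : GL (Fin 2) ℝ) : Matrix (Fin 2) (Fin 2) ℝ) 0 0 = 1) :
    g = uG (((g : GL (Fin 2) ℝ) : Matrix (Fin 2) (Fin 2) ℝ) 0 1) := by
  apply aff_ext
  rw [aff_entries g, h]; rfl

lemma eq_dG (g : affineGroupR)
    (h : ((g : GL (Fin 2) ℝ) : Matrix (Fin 2) (Fin 2) ℝ) 0 1 = 0) :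
    g = dG (Units.mk0 _ (aff_00_ne g)) := by
  apply aff_ext
  show _ = !![((g : GL (Fin 2) ℝ) : Matrix (Fin 2) (Fin 2) ℝ) 0 0, 0; 0, 1]
  have h0 := g.2.1
  have h1 := g.2.2
  ext i j
  fin_cases i <;> fin_cases j <;> simp [h, h0, h1]

lemma dG_inv (a : ℝˣ) : (dG a)⁻¹ = dG a⁻¹ := by
  apply aff_ext
  show ((dUnit a)⁻¹ : GL (Fin 2) ℝ).val = (dUnit a⁻¹).val
  show !![((a:ℝ))⁻¹, 0; 0, 1] = !![((a⁻¹ : ℝˣ) : ℝ), 0; 0, 1]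
  rw [Units.val_inv_eq_inv_val]

lemma conj_eq (a : ℝˣ) (t : ℝ) : dG a * uG t * dG a⁻¹ = uG ((a : ℝ) * t) := by
  apply aff_ext
  show ((dUnit a * uUnit t * dUnit a⁻¹ : GL (Fin 2) ℝ) : Matrix (Fin 2) (Fin 2) ℝ) = _
  simp only [Units.val_mul]
  show !![(a:ℝ), 0; 0, 1] * !![1, t; 0, 1] * !![((a⁻¹ : ℝˣ) : ℝ), 0; 0, 1]
      = !![1, (a:ℝ) * t; 0, 1]
  rw [Units.val_inv_eq_inv_val, Matrix.mul_fin_two, Matrix.mul_fin_two]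
  norm_num [mul_inv_cancel₀ a.ne_zero]

lemma continuous_uG : Continuous uG := by
  apply Continuous.subtype_mk
  rw [Units.continuous_iff]
  constructor
  · show Continuous fun b : ℝ => (!![1, b; 0, 1] : Matrix (Fin 2) (Fin 2) ℝ)
    refine continuous_pi fun i => continuous_pi fun j => ?_
    fin_cases i <;> fin_cases j <;> simp <;> continuity
  · show Continuous fun b : ℝ => (((uUnit b)⁻¹ : GL (Fin 2) ℝ) : Matrix (Fin 2) (Fin 2) ℝ)
    show Continuous fun b : ℝ => (!![1, -b; 0, 1] : Matrix (Fin 2) (Fin 2) ℝ)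
    refine continuous_pi fun i => continuous_pi fun j => ?_
    fin_cases i <;> fin_cases j <;> simp <;> continuity

lemma continuous_dG : Continuous dG := by
  apply Continuous.subtype_mk
  rw [Units.continuous_iff]
  have hval : Continuous (Units.val : ℝˣ → ℝ) := Units.continuous_val
  have hinv : Continuous fun a : ℝˣ => ((a : ℝ))⁻¹ := by
    have : Continuous fun a : ℝˣ => ((a⁻¹ : ℝˣ) : ℝ) := hval.comp continuous_inv
    simpa [Units.val_inv_eq_inv_val] using this
  constructor
  · show Continuous fun a : ℝˣ => (!![(a : ℝ), 0; 0, 1] : Matrix (Fin 2) (Fin 2) ℝ)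
    refine continuous_pi fun i => continuous_pi fun j => ?_
    fin_cases i <;> fin_cases j <;> simp <;> fun_prop
  · show Continuous fun a : ℝˣ => (!![((a : ℝ))⁻¹, 0; 0, 1] : Matrix (Fin 2) (Fin 2) ℝ)
    refine continuous_pi fun i => continuous_pi fun j => ?_
    fin_cases i <;> fin_cases j <;> simp <;> fun_prop

lemma compact_slice (R : ℝ) (hR : 0 < R) :
    IsCompact (dG '' {a : ℝˣ | R⁻¹ ≤ |(a : ℝ)| ∧ |(a : ℝ)| ≤ R}) := by
  refine IsCompact.image ?_ continuous_dG
  rw [Units.isEmbedding_val₀.isCompact_iff]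
  have himg : (Units.val '' {a : ℝˣ | R⁻¹ ≤ |(a : ℝ)| ∧ |(a : ℝ)| ≤ R})
      = {x : ℝ | R⁻¹ ≤ |x| ∧ |x| ≤ R} := by
    ext x
    constructor
    · rintro ⟨a, ha, rfl⟩; exact ha
    · rintro ⟨h1, h2⟩
      have hx : x ≠ 0 := by
        intro h
        rw [h, abs_zero] at h1
        exact absurd h1 (not_le.2 (inv_pos.2 hR))
      exact ⟨Units.mk0 x hx, ⟨h1, h2⟩, rfl⟩
  rw [himg]
  refine IsCompact.of_isClosed_subset (isCompact_Icc (a := -R) (b := R)) ?_ ?_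
  · exact ((isClosed_le continuous_const continuous_abs).inter
      (isClosed_le continuous_abs continuous_const))
  · intro x hx
    exact abs_le.1 hx.2

end AuxStmt12

open Matrix in
/-- if a length on the affine group of the real line is not proper on
the diagonal subgroup `D` (matrices `[[a,0],[0,1]]`), then it is bounded on the
unipotent subgroup `U` (matrices `[[1,b],[0,1]]`). -/
theorem stmt_12 (L : affineGroupR → ℝ) (hL : IsLength L)
    (hnp : ∃ c : ℝ, ¬ IsCompact (closure {g : affineGroupR |
      ((g : GL (Fin 2) ℝ) : Matrix (Fin 2) (Fin 2) ℝ) 0 1 = 0 ∧ L g ≤ c})) :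
    ∃ M : ℝ, ∀ g : affineGroupR,
      ((g : GL (Fin 2) ℝ) : Matrix (Fin 2) (Fin 2) ℝ) 0 0 = 1 → L g ≤ M := by
  obtain ⟨c, hc⟩ := hnp
  have hsym : ∀ a : ℝˣ, L (dG a⁻¹) = L (dG a) := by
    intro a
    rw [← dG_inv, ← hL.2]
  -- Step 1 : sublevel of L on the diagonal contains elements with |a| arbitrarily large
  have key : ∀ R : ℝ, ∃ a : ℝˣ, R ≤ |(a : ℝ)| ∧ L (dG a) ≤ c := by
    by_contra hcon
    push_neg at hcon
    obtain ⟨R, hR⟩ := hcon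
    set R' : ℝ := max R 1 with hR'def
    have hR'pos : 0 < R' := lt_of_lt_of_le one_pos (le_max_right _ _)
    have hB : ∀ a : ℝˣ, L (dG a) ≤ c → |(a : ℝ)| < R' := by
      intro a ha
      have := hR a
      rcases lt_or_ge (|(a : ℝ)|) R with h | h
      · exact lt_of_lt_of_le h (le_max_left _ _)
      · exact absurd ha (not_le.2 (this h))
    have hsub : {g : affineGroupR |
        ((g : GL (Fin 2) ℝ) : Matrix (Fin 2) (Fin 2) ℝ) 0 1 = 0 ∧ L g ≤ c}
        ⊆ dG '' {a : ℝˣ | R'⁻¹ ≤ |(a : ℝ)| ∧ |(a : ℝ)| ≤ R'} := by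
      rintro g ⟨h01, hLg⟩
      have hg := eq_dG g h01
      set a : ℝˣ := Units.mk0 _ (aff_00_ne g) with hadef
      have hLa : L (dG a) ≤ c := by rw [← hg]; exact hLg
      have h1 : |(a : ℝ)| < R' := hB a hLa
      have h2 : |((a⁻¹ : ℝˣ) : ℝ)| < R' := hB a⁻¹ (by rw [hsym]; exact hLa)
      rw [Units.val_inv_eq_inv_val, abs_inv] at h2
      have hapos : 0 < |(a : ℝ)| := abs_pos.2 a.ne_zero
      have h3 : R'⁻¹ < |(a : ℝ)| := inv_lt_of_inv_lt₀ hapos h2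
      exact ⟨a, ⟨le_of_lt h3, le_of_lt h1⟩, hg.symm⟩
    have hcpt := compact_slice R' hR'pos
    exact hc (IsCompact.of_isClosed_subset hcpt isClosed_closure
      (closure_minimal hsub hcpt.isClosed))
  -- Step 2 : bound on the unipotent subgroup
  obtain ⟨M₀, hM₀⟩ := hL.1.2.1 (uG '' Set.Icc (-1 : ℝ) 1)
    (isCompact_Icc.image continuous_uG)
  refine ⟨c + M₀ + c, fun g hg => ?_⟩
  set b : ℝ := ((g : GL (Fin 2) ℝ) : Matrix (Fin 2) (Fin 2) ℝ) 0 1 with hbdef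
  have hgu : g = uG b := eq_uG g hg
  obtain ⟨a, ha1, ha2⟩ := key (max |b| 1)
  have hane : (a : ℝ) ≠ 0 := a.ne_zero
  have habs : 0 < |(a : ℝ)| := abs_pos.2 hane
  have ht : |b / (a : ℝ)| ≤ 1 := by
    rw [abs_div, div_le_one habs]
    exact le_trans (le_max_left _ _) ha1
  have hconj : uG b = dG a * uG (b / (a : ℝ)) * dG a⁻¹ := by
    rw [conj_eq]
    congr 1
    field_simp
  have hmem : uG (b / (a : ℝ)) ∈ uG '' Set.Icc (-1 : ℝ) 1 :=
    ⟨_, abs_le.1 ht, rfl⟩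
  calc L g = L (dG a * uG (b / (a : ℝ)) * dG a⁻¹) := by rw [hgu, hconj]
    _ ≤ L (dG a * uG (b / (a : ℝ))) + L (dG a⁻¹) := hL.1.2.2 _ _
    _ ≤ L (dG a) + L (uG (b / (a : ℝ))) + L (dG a⁻¹) :=
        add_le_add_left (hL.1.2.2 _ _) _
    _ ≤ c + M₀ + c := by
        have := hsym a
        gcongr
        · exact hM₀ _ hmem
        · rw [hsym]; exact ha2
end

section
/- Let K be a nontrivially normed field that is locally compact (e.g. ℝ, ℂ, or ℚ_p). Then SL(2, K), with its topology as a subset of the 2×2 matrices over K, has strong Property PL: every semigroup length on SL(2, K) is either bounded or proper. -/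
open scoped NNReal Topology

/-- The topology on `SL(n, K)` induced from the space of `n × n` matrices. -/
instance sltop (n : ℕ) (K : Type*) [CommRing K] [TopologicalSpace K] :
    TopologicalSpace (Matrix.SpecialLinearGroup (Fin n) K) :=
  instTopologicalSpaceSubtype

section Aux

open Matrix Metric

set_option linter.unnecessarySeqFocus false
set_option linter.unreachableTactic false
set_option linter.unusedTactic false

local notation "SL2" K => Matrix.SpecialLinearGroup (Fin 2) K

variable {K : Type*} [Field K]

/-- Upper elementary matrix. -/
def Em (t : K) : SL2 K := ⟨!![1, t; 0, 1], by simp [Matrix.det_fin_two_of]⟩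
/-- Lower elementary matrix. -/
def Fm (t : K) : SL2 K := ⟨!![1, 0; t, 1], by simp [Matrix.det_fin_two_of]⟩
/-- Weyl element. -/
def Wm : SL2 K := ⟨!![0, 1; -1, 0], by simp [Matrix.det_fin_two_of]⟩
/-- Inverse Weyl element. -/
def Wm' : SL2 K := ⟨!![0, -1; 1, 0], by simp [Matrix.det_fin_two_of]⟩
/-- Diagonal matrix. -/
def Dm (a : K) (ha : a ≠ 0) : SL2 K := ⟨!![a, 0; 0, a⁻¹], by simp [Matrix.det_fin_two_of, ha]⟩

lemma sl2_det (g : SL2 K) : g.1 0 0 * g.1 1 1 - g.1 0 1 * g.1 1 0 = 1 := by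
  have := g.2; rwa [Matrix.det_fin_two] at this

lemma diagonalize (g : SL2 K) (ha : g.1 0 0 ≠ 0) :
    Fm (-(g.1 1 0 / g.1 0 0)) * g * Em (-(g.1 0 1 / g.1 0 0)) = Dm (g.1 0 0) ha := by
  have hdet := sl2_det g
  apply Subtype.ext
  repeat rw [Matrix.SpecialLinearGroup.coe_mul]
  simp only [Matrix.SpecialLinearGroup.coe_mul, Fm, Em, Dm]
  rw [Matrix.eta_fin_two g.1]
  ext i j
  fin_cases i <;> fin_cases j <;>
    simp [Matrix.mul_fin_two] <;> field_simp <;>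
    first | linear_combination hdet | linear_combination (-1:K)*hdet | ring

lemma conj_identity (a : K) (ha : a ≠ 0) (u : K) :
    Dm a ha * Em u * (Wm * Dm a ha * Wm') = Em (a ^ 2 * u) := by
  apply Subtype.ext
  repeat rw [Matrix.SpecialLinearGroup.coe_mul]
  simp only [Matrix.SpecialLinearGroup.coe_mul, Fm, Em, Dm, Wm, Wm']
  ext i j
  fin_cases i <;> fin_cases j <;> (simp [Matrix.mul_fin_two]; try field_simp) <;> ring

lemma F_eq (t : K) : Fm t = Wm * Em (-t) * Wm' := by
  apply Subtype.ext
  repeat rw [Matrix.SpecialLinearGroup.coe_mul]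
  simp only [Matrix.SpecialLinearGroup.coe_mul, Fm, Em, Wm, Wm']
  ext i j
  fin_cases i <;> fin_cases j <;> simp [Matrix.mul_fin_two]

lemma bruhat (g : SL2 K) (hc : g.1 1 0 ≠ 0) :
    g = Em ((g.1 0 0 - 1) / g.1 1 0) * Fm (g.1 1 0) * Em ((g.1 1 1 - 1) / g.1 1 0) := by
  have hdet : g.1 0 0 * g.1 1 1 - g.1 0 1 * g.1 1 0 = 1 := sl2_det g
  apply Subtype.ext
  repeat rw [Matrix.SpecialLinearGroup.coe_mul]
  simp only [Matrix.SpecialLinearGroup.coe_mul, Fm, Em]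
  rw [Matrix.eta_fin_two g.1]
  ext i j
  fin_cases i <;> fin_cases j <;> (simp [Matrix.mul_fin_two]; try field_simp) <;>
    first | linear_combination hdet | linear_combination (-1:K)*hdet | ring

lemma F_mul_F (s t : K) : Fm s * Fm t = Fm (s + t) := by
  apply Subtype.ext
  repeat rw [Matrix.SpecialLinearGroup.coe_mul]
  simp only [Matrix.SpecialLinearGroup.coe_mul, Fm]
  ext i j
  fin_cases i <;> fin_cases j <;> simp [Matrix.mul_fin_two]

lemma Fm_zero : Fm (0 : K) = 1 := by
  apply Subtype.ext
  ext i j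
  fin_cases i <;> fin_cases j <;> simp [Fm]

lemma Wg_entries (g : SL2 K) : (Wm * g).1 = !![g.1 1 0, g.1 1 1; -g.1 0 0, -g.1 0 1] := by
  repeat rw [Matrix.SpecialLinearGroup.coe_mul]
  simp only [Matrix.SpecialLinearGroup.coe_mul, Wm]
  rw [Matrix.eta_fin_two g.1]
  ext i j
  fin_cases i <;> fin_cases j <;> simp [Matrix.mul_fin_two]

lemma gW_entries (g : SL2 K) : (g * Wm).1 = !![-g.1 0 1, g.1 0 0; -g.1 1 1, g.1 1 0] := by
  repeat rw [Matrix.SpecialLinearGroup.coe_mul]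
  simp only [Matrix.SpecialLinearGroup.coe_mul, Wm]
  rw [Matrix.eta_fin_two g.1]
  ext i j
  fin_cases i <;> fin_cases j <;> simp [Matrix.mul_fin_two]

lemma gF_entries (g : SL2 K) (s : K) :
    (g * Fm s).1 = !![g.1 0 0 + g.1 0 1 * s, g.1 0 1; g.1 1 0 + g.1 1 1 * s, g.1 1 1] := by
  repeat rw [Matrix.SpecialLinearGroup.coe_mul]
  simp only [Matrix.SpecialLinearGroup.coe_mul, Fm]
  rw [Matrix.eta_fin_two g.1]
  ext i j
  fin_cases i <;> fin_cases j <;> simp [Matrix.mul_fin_two] <;> ring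

end Aux

section AuxTop

open Matrix Metric

local notation "SL2" K => Matrix.SpecialLinearGroup (Fin 2) K

variable {K : Type*} [NontriviallyNormedField K]

lemma continuous_Em : Continuous (Em (K := K)) := by
  apply Continuous.subtype_mk
  apply continuous_matrix
  intro i j
  fin_cases i <;> fin_cases j <;> simp [Em] <;> continuity

lemma continuous_Fm : Continuous (Fm (K := K)) := by
  apply Continuous.subtype_mk
  apply continuous_matrix
  intro i j
  fin_cases i <;> fin_cases j <;> simp [Fm] <;> continuity

variable [LocallyCompactSpace K]

lemma ball_compact : IsCompact (closedBall (0:K) 1) := by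
  have : ProperSpace K := ProperSpace.of_nontriviallyNormedField_of_weaklyLocallyCompactSpace K
  exact isCompact_closedBall 0 1

lemma compact_of_entry_bounded (R : ℝ) (S : Set (SL2 K))
    (hS : ∀ g ∈ S, ∀ i j, ‖g.1 i j‖ ≤ R) : IsCompact (closure S) := by
  have hP : ProperSpace K := ProperSpace.of_nontriviallyNormedField_of_weaklyLocallyCompactSpace K
  set T : Set (Matrix (Fin 2) (Fin 2) K) :=
    Set.pi Set.univ (fun _ : Fin 2 => Set.pi Set.univ (fun _ : Fin 2 => closedBall (0:K) R))
  have hT : IsCompact T := by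
    apply isCompact_univ_pi
    intro i
    exact isCompact_univ_pi fun j => isCompact_closedBall 0 R
  have hTc : IsClosed T := hT.isClosed
  have hsub : S ⊆ Subtype.val ⁻¹' T := by
    intro g hg i _ j _
    simpa using hS g hg i j
  have hKc : IsCompact (Subtype.val ⁻¹' T : Set (SL2 K)) := by
    refine Topology.IsEmbedding.subtypeVal.isCompact_iff.mpr ?_
    have : Subtype.val '' (Subtype.val ⁻¹' T : Set (SL2 K))
        = T ∩ {m : Matrix (Fin 2) (Fin 2) K | m.det = 1} := by
      ext m
      constructor
      · rintro ⟨g, hg, rfl⟩; exact ⟨hg, g.2⟩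
      · rintro ⟨hm, hdet⟩; exact ⟨⟨m, hdet⟩, hm, rfl⟩
    rw [this]
    exact hT.inter_right (isClosed_singleton.preimage continuous_id.matrix_det)
  exact hKc.of_isClosed_subset isClosed_closure
    (closure_minimal hsub (hTc.preimage continuous_subtype_val))

end AuxTop

/-- for a nontrivially normed, locally compact field `K`, the group
`SL(2, K)` has strong Property PL. -/
theorem stmt_13 (K : Type*) [NontriviallyNormedField K] [LocallyCompactSpace K] :
    HasStrongPL (Matrix.SpecialLinearGroup (Fin 2) K) := by
  intro L hL
  obtain ⟨hL0, hLc, hLs⟩ := hL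
  by_cases hp : ∀ c : ℝ, ∃ R : ℝ,
      ∀ g : Matrix.SpecialLinearGroup (Fin 2) K, L g ≤ c → ∀ i j, ‖g.1 i j‖ ≤ R
  -- proper case
  · right
    intro c
    obtain ⟨R, hR⟩ := hp c
    exact compact_of_entry_bounded R _ fun g hg => hR g hg
  -- bounded case
  · left
    push_neg at hp
    obtain ⟨c₀, hc₀⟩ := hp
    have hc₀0 : 0 ≤ c₀ := by
      obtain ⟨g, hg, -⟩ := hc₀ 0
      exact le_trans (hL0 g) hg
    -- the compact reference set and its bound M
    set C : Set (Matrix.SpecialLinearGroup (Fin 2) K) :=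
      (Em '' Metric.closedBall 0 1 ∪ Fm '' Metric.closedBall 0 1) ∪ {Wm, Wm'} with hC
    have hCcomp : IsCompact C :=
      ((ball_compact.image continuous_Em).union (ball_compact.image continuous_Fm)).union
        (Set.toFinite _).isCompact
    obtain ⟨M, hM⟩ := hLc C hCcomp
    have hME : ∀ t : K, ‖t‖ ≤ 1 → L (Em t) ≤ M := fun t ht =>
      hM _ (Or.inl (Or.inl ⟨t, by simpa [Metric.mem_closedBall] using ht, rfl⟩))
    have hMF : ∀ t : K, ‖t‖ ≤ 1 → L (Fm t) ≤ M := fun t ht =>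
      hM _ (Or.inl (Or.inr ⟨t, by simpa [Metric.mem_closedBall] using ht, rfl⟩))
    have hMW : L Wm ≤ M := hM _ (Or.inr (by simp))
    have hMW' : L Wm' ≤ M := hM _ (Or.inr (by simp))
    have hM0 : 0 ≤ M := le_trans (hL0 Wm) hMW
    -- key: arbitrarily large "dominant corner" elements of bounded length
    have key : ∀ R : ℝ, ∃ g' : Matrix.SpecialLinearGroup (Fin 2) K,
        L g' ≤ c₀ + 2*M ∧ R < ‖g'.1 0 0‖ ∧ ‖g'.1 0 1‖ ≤ ‖g'.1 0 0‖ ∧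
          ‖g'.1 1 0‖ ≤ ‖g'.1 0 0‖ := by
      intro R
      obtain ⟨g, hgL, i, j, hR⟩ := hc₀ R
      set m : ℝ := max (max ‖g.1 0 0‖ ‖g.1 0 1‖) (max ‖g.1 1 0‖ ‖g.1 1 1‖) with hm
      have h00 : ‖g.1 0 0‖ ≤ m := le_max_of_le_left (le_max_left _ _)
      have h01 : ‖g.1 0 1‖ ≤ m := le_max_of_le_left (le_max_right _ _)
      have h10 : ‖g.1 1 0‖ ≤ m := le_max_of_le_right (le_max_left _ _)
      have h11 : ‖g.1 1 1‖ ≤ m := le_max_of_le_right (le_max_right _ _)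
      have hRm : R < m := by
        refine lt_of_lt_of_le hR ?_
        fin_cases i <;> fin_cases j <;> assumption
      have hcase : m = ‖g.1 0 0‖ ∨ m = ‖g.1 0 1‖ ∨ m = ‖g.1 1 0‖ ∨ m = ‖g.1 1 1‖ := by
        rcases max_choice (max ‖g.1 0 0‖ ‖g.1 0 1‖) (max ‖g.1 1 0‖ ‖g.1 1 1‖) with h | h <;>
          rw [hm, h]
        · rcases max_choice ‖g.1 0 0‖ ‖g.1 0 1‖ with h' | h' <;> rw [h']
          exacts [Or.inl rfl, Or.inr (Or.inl rfl)]
        · rcases max_choice ‖g.1 1 0‖ ‖g.1 1 1‖ with h' | h' <;> rw [h']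
          exacts [Or.inr (Or.inr (Or.inl rfl)), Or.inr (Or.inr (Or.inr rfl))]
      rcases hcase with h | h | h | h
      · exact ⟨g, by linarith, by rw [← h]; exact hRm, by rw [← h]; exact h01,
          by rw [← h]; exact h10⟩
      · have e1 : ‖(g * Wm).1 0 0‖ = ‖g.1 0 1‖ := by rw [gW_entries]; simp
        have e2 : ‖(g * Wm).1 0 1‖ = ‖g.1 0 0‖ := by rw [gW_entries]; simp
        have e3 : ‖(g * Wm).1 1 0‖ = ‖g.1 1 1‖ := by rw [gW_entries]; simp
        refine ⟨g * Wm, ?_, ?_, ?_, ?_⟩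
        · calc L (g * Wm) ≤ L g + L Wm := hLs _ _
            _ ≤ c₀ + 2*M := by linarith
        · rw [e1, ← h]; exact hRm
        · rw [e1, e2, ← h]; exact h00
        · rw [e1, e3, ← h]; exact h11
      · have e1 : ‖(Wm * g).1 0 0‖ = ‖g.1 1 0‖ := by rw [Wg_entries]; simp
        have e2 : ‖(Wm * g).1 0 1‖ = ‖g.1 1 1‖ := by rw [Wg_entries]; simp
        have e3 : ‖(Wm * g).1 1 0‖ = ‖g.1 0 0‖ := by rw [Wg_entries]; simp
        refine ⟨Wm * g, ?_, ?_, ?_, ?_⟩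
        · calc L (Wm * g) ≤ L Wm + L g := hLs _ _
            _ ≤ c₀ + 2*M := by linarith
        · rw [e1, ← h]; exact hRm
        · rw [e1, e2, ← h]; exact h11
        · rw [e1, e3, ← h]; exact h00
      · have ew : (Wm * g * Wm).1 = !![-(g.1 1 1), g.1 1 0; g.1 0 1, -(g.1 0 0)] := by
          have := gW_entries (Wm * g)
          rw [Wg_entries g] at this
          rw [this]
          ext i j
          fin_cases i <;> fin_cases j <;> simp
        have e1 : ‖(Wm * g * Wm).1 0 0‖ = ‖g.1 1 1‖ := by rw [ew]; simp
        have e2 : ‖(Wm * g * Wm).1 0 1‖ = ‖g.1 1 0‖ := by rw [ew]; simp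
        have e3 : ‖(Wm * g * Wm).1 1 0‖ = ‖g.1 0 1‖ := by rw [ew]; simp
        refine ⟨Wm * g * Wm, ?_, ?_, ?_, ?_⟩
        · calc L (Wm * g * Wm) ≤ L (Wm * g) + L Wm := hLs _ _
            _ ≤ L Wm + L g + L Wm := by linarith [hLs Wm g]
            _ ≤ c₀ + 2*M := by linarith
        · rw [e1, ← h]; exact hRm
        · rw [e1, e2, ← h]; exact h10
        · rw [e1, e3, ← h]; exact h01
    -- bound on all upper elementary matrices
    have EB : ∀ t : K, L (Em t) ≤ 2*c₀ + 11*M := by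
      intro t
      obtain ⟨g', hg'L, hbig, hb, hc⟩ := key (max 1 ‖t‖)
      set a : K := g'.1 0 0 with hadef
      have ha1 : 1 < ‖a‖ := lt_of_le_of_lt (le_max_left _ _) hbig
      have hapos : (0:ℝ) < ‖a‖ := by linarith
      have ha : a ≠ 0 := by
        intro h
        rw [h, norm_zero] at ha1
        linarith
      have hD : L (Dm a ha) ≤ c₀ + 4*M := by
        rw [← diagonalize g' ha]
        have h1 : L (Fm (-(g'.1 1 0 / a))) ≤ M := by
          apply hMF
          rw [norm_neg, norm_div]
          exact div_le_one_of_le₀ hc (le_of_lt hapos)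
        have h2 : L (Em (-(g'.1 0 1 / a))) ≤ M := by
          apply hME
          rw [norm_neg, norm_div]
          exact div_le_one_of_le₀ hb (le_of_lt hapos)
        calc L (Fm (-(g'.1 1 0 / a)) * g' * Em (-(g'.1 0 1 / a)))
            ≤ L (Fm (-(g'.1 1 0 / a)) * g') + L (Em (-(g'.1 0 1 / a))) := hLs _ _
          _ ≤ L (Fm (-(g'.1 1 0 / a))) + L g' + L (Em (-(g'.1 0 1 / a))) := by
              linarith [hLs (Fm (-(g'.1 1 0 / a))) g']
          _ ≤ c₀ + 4*M := by linarith
      have hD' : L (Wm * Dm a ha * Wm') ≤ c₀ + 6*M := by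
        calc L (Wm * Dm a ha * Wm') ≤ L (Wm * Dm a ha) + L Wm' := hLs _ _
          _ ≤ L Wm + L (Dm a ha) + L Wm' := by linarith [hLs Wm (Dm a ha)]
          _ ≤ c₀ + 6*M := by linarith
      have hconj : Em t = Dm a ha * Em (t / a^2) * (Wm * Dm a ha * Wm') := by
        rw [conj_identity a ha (t / a^2)]
        congr 1
        field_simp
      have hsmall : ‖t / a^2‖ ≤ 1 := by
        rw [norm_div, norm_pow]
        apply div_le_one_of_le₀ _ (by positivity)
        have h1 : ‖t‖ ≤ max 1 ‖t‖ := le_max_right _ _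
        nlinarith
      rw [hconj]
      calc L (Dm a ha * Em (t / a^2) * (Wm * Dm a ha * Wm'))
          ≤ L (Dm a ha * Em (t / a^2)) + L (Wm * Dm a ha * Wm') := hLs _ _
        _ ≤ L (Dm a ha) + L (Em (t / a^2)) + L (Wm * Dm a ha * Wm') := by
            linarith [hLs (Dm a ha) (Em (t / a^2))]
        _ ≤ 2*c₀ + 11*M := by linarith [hME _ hsmall]
    -- bound on lower elementary matrices
    have FB : ∀ t : K, L (Fm t) ≤ 2*c₀ + 13*M := by
      intro t
      rw [F_eq t]
      calc L (Wm * Em (-t) * Wm') ≤ L (Wm * Em (-t)) + L Wm' := hLs _ _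
        _ ≤ L Wm + L (Em (-t)) + L Wm' := by linarith [hLs Wm (Em (-t))]
        _ ≤ 2*c₀ + 13*M := by linarith [EB (-t)]
    -- bound on elements with nonzero lower-left entry
    have hA : ∀ g : Matrix.SpecialLinearGroup (Fin 2) K, g.1 1 0 ≠ 0 →
        L g ≤ 6*c₀ + 35*M := by
      intro g hc
      rw [bruhat g hc]
      calc L (Em ((g.1 0 0 - 1) / g.1 1 0) * Fm (g.1 1 0) * Em ((g.1 1 1 - 1) / g.1 1 0))
          ≤ L (Em ((g.1 0 0 - 1) / g.1 1 0) * Fm (g.1 1 0))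
            + L (Em ((g.1 1 1 - 1) / g.1 1 0)) := hLs _ _
        _ ≤ L (Em ((g.1 0 0 - 1) / g.1 1 0)) + L (Fm (g.1 1 0))
            + L (Em ((g.1 1 1 - 1) / g.1 1 0)) := by
            linarith [hLs (Em ((g.1 0 0 - 1) / g.1 1 0)) (Fm (g.1 1 0))]
        _ ≤ 6*c₀ + 35*M := by linarith [EB ((g.1 0 0 - 1) / g.1 1 0), FB (g.1 1 0), EB ((g.1 1 1 - 1) / g.1 1 0)]
    refine ⟨8*c₀ + 48*M, fun g => ?_⟩
    by_cases hc : g.1 1 0 = 0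
    · have hd : g.1 1 1 ≠ 0 := by
        intro h
        have := sl2_det g
        rw [hc, h] at this
        simp at this
      have hgf : (g * Fm 1).1 1 0 ≠ 0 := by
        rw [gF_entries]
        simpa [hc] using hd
      have hsplit : g = (g * Fm 1) * Fm (-1) := by
        rw [mul_assoc, F_mul_F]
        norm_num [Fm_zero]
      rw [hsplit]
      calc L ((g * Fm 1) * Fm (-1)) ≤ L (g * Fm 1) + L (Fm (-1)) := hLs _ _
        _ ≤ 8*c₀ + 48*M := by linarith [hA _ hgf, FB (-1 : K)]
    · linarith [hA g hc]
end

section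
/- Let n ≥ 2, let H = SL(n, ℝ) with its usual topology, and let A be a locally compact group. Let L be a semigroup length on the product group H × A. If the restriction of L to H × {1} is proper and the restriction of L to {1} × A is proper, then L is proper on H × A. -/
open scoped NNReal Topology

section Stmt16Aux
namespace Stmt16Aux
open Matrix

abbrev MM (n : ℕ) := Matrix (Fin n) (Fin n) ℝ
abbrev SL (n : ℕ) := Matrix.SpecialLinearGroup (Fin n) ℝ

variable {n : ℕ}




lemma entry_mul_bound {A B : MM n} {a b : ℝ} (ha : ∀ i j, |A i j| ≤ a)
    (hb : ∀ i j, |B i j| ≤ b) (ha0 : 0 ≤ a) (i j : Fin n) :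
    |(A * B) i j| ≤ n * (a * b) := by
  rw [Matrix.mul_apply]
  calc |∑ k, A i k * B k j| ≤ ∑ k, |A i k * B k j| := Finset.abs_sum_le_sum_abs _ _
    _ ≤ ∑ _k : Fin n, a * b := Finset.sum_le_sum (fun k _ => by
        rw [abs_mul]
        exact mul_le_mul (ha i k) (hb k j) (abs_nonneg _) ha0)
    _ = n * (a * b) := by simp [Finset.sum_const, Finset.card_univ, nsmul_eq_mul]

lemma orth_entry {B : MM n} (h : Bᵀ * B = 1) (i j : Fin n) : |B i j| ≤ 1 := by
  have h1 : (Bᵀ * B) j j = 1 := by rw [h, Matrix.one_apply_eq]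
  rw [Matrix.mul_apply] at h1
  have h2 : B i j * B i j ≤ 1 := by
    rw [← h1]
    have := Finset.single_le_sum (f := fun k => Bᵀ j k * B k j)
      (fun k _ => by simp only [Matrix.transpose_apply]; exact mul_self_nonneg _)
      (Finset.mem_univ i)
    simpa [Matrix.transpose_apply] using this
  exact abs_le_one_iff_mul_self_le_one.2 h2

lemma isClosedEmbedding_val :
    Topology.IsClosedEmbedding ((↑) : SL n → MM n) := by
  apply Topology.IsClosedEmbedding.subtypeVal
  exact isClosed_eq (continuous_id.matrix_det) continuous_const

def SLbd (n : ℕ) (r : ℝ) : Set (SL n) := {x : SL n | ∀ i j, |(x : MM n) i j| ≤ r}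

lemma isCompact_matbd (r : ℝ) : IsCompact {m : MM n | ∀ i j, |m i j| ≤ r} := by
  have he : {m : MM n | ∀ i j, |m i j| ≤ r}
      = Set.univ.pi (fun _i : Fin n => Set.univ.pi fun _j : Fin n => Set.Icc (-r) r) := by
    ext m
    constructor
    · intro hm i _ j _
      exact Set.mem_Icc.2 (abs_le.1 (hm i j))
    · intro hm i j
      exact abs_le.2 (Set.mem_Icc.1 (hm i (Set.mem_univ i) j (Set.mem_univ j)))
  rw [he]
  exact isCompact_univ_pi fun i => isCompact_univ_pi fun j => isCompact_Icc

lemma isCompact_SLbd (r : ℝ) : IsCompact (SLbd n r) :=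
  isClosedEmbedding_val.isCompact_preimage (isCompact_matbd r)

lemma isClosed_SLbd (r : ℝ) : IsClosed (SLbd n r) :=
  (isCompact_matbd r).isClosed.preimage isClosedEmbedding_val.continuous


section NZ
variable [NeZero n]
open Fin.NatCast Fin.CommRing
def tau (n : ℕ) [NeZero n] : Equiv.Perm (Fin n) := Equiv.addLeft 1
def Pmat (n : ℕ) [NeZero n] : MM n := (tau n).toPEquiv.toMatrix
def sgn (n : ℕ) [NeZero n] : ℝ := ((Equiv.Perm.sign (tau n) : ℤ) : ℝ)
def sfun (n : ℕ) [NeZero n] : Fin n → ℝ := fun i => if i = 0 then sgn n else 1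
def Cmat (n : ℕ) [NeZero n] : MM n := diagonal (sfun n) * Pmat n






lemma Pmat_mul_diag (w : Fin n → ℝ) :
    Pmat n * diagonal w = diagonal (fun i => w (tau n i)) * Pmat n := by
  rw [Pmat, PEquiv.toMatrix_toPEquiv_mul]
  ext i j
  rw [Matrix.submatrix_apply, Matrix.diagonal_mul, PEquiv.toMatrix_apply, Matrix.diagonal_apply]
  by_cases h : tau n i = j
  · subst h; simp [Equiv.toPEquiv]
  · simp [Equiv.toPEquiv, h, Ne.symm h]

lemma Pmat_pow_mul_diag (m : ℕ) (w : Fin n → ℝ) :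
    Pmat n ^ m * diagonal w = diagonal (fun i => w ((tau n)^[m] i)) * Pmat n ^ m := by
  induction m generalizing w with
  | zero => simp
  | succ k ih =>
    have h1 : Pmat n ^ (k+1) * diagonal w = Pmat n ^ k * (Pmat n * diagonal w) := by
      rw [pow_succ, mul_assoc]
    rw [h1, Pmat_mul_diag, ← mul_assoc, ih (fun i => w (tau n i)), mul_assoc, ← pow_succ]
    have h2 : (fun i => w (tau n ((tau n)^[k] i))) = fun i => w ((tau n)^[k+1] i) := by
      funext i
      rw [Function.iterate_succ_apply']
    rw [h2]

lemma diag_mul_Pmat_pow (v : Fin n → ℝ) (m : ℕ) :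
    (diagonal v * Pmat n) ^ m
      = diagonal (fun i => ∏ j ∈ Finset.range m, v ((tau n)^[j] i)) * Pmat n ^ m := by
  induction m with
  | zero => simp
  | succ k ih =>
    rw [pow_succ, ih, mul_assoc, ← mul_assoc (Pmat n ^ k), Pmat_pow_mul_diag,
      mul_assoc (diagonal fun i => v ((tau n)^[k] i)), ← pow_succ, ← mul_assoc,
      diagonal_mul_diagonal]
    have h2 : (fun i => (∏ j ∈ Finset.range k, v ((tau n)^[j] i)) * v ((tau n)^[k] i))
        = fun i => ∏ j ∈ Finset.range (k+1), v ((tau n)^[j] i) := by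
      funext i
      rw [Finset.prod_range_succ]
    rw [h2]

lemma tau_iterate (m : ℕ) (i : Fin n) : (tau n)^[m] i = (m : Fin n) + i := by
  induction m with
  | zero => simp
  | succ k ih =>
    rw [Function.iterate_succ_apply', ih]
    show (1 : Fin n) + ((k : Fin n) + i) = ((k+1 : ℕ) : Fin n) + i
    push_cast
    ring

lemma prod_tau (v : Fin n → ℝ) (i : Fin n) :
    ∏ j ∈ Finset.range n, v ((tau n)^[j] i) = ∏ k, v k := by
  have h1 : ∀ j : ℕ, v ((tau n)^[j] i) = v ((j : Fin n) + i) := fun j => by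
    rw [tau_iterate]
  calc ∏ j ∈ Finset.range n, v ((tau n)^[j] i)
      = ∏ j ∈ Finset.range n, v ((j : Fin n) + i) := Finset.prod_congr rfl fun j _ => h1 j
    _ = ∏ k : Fin n, v ((k : Fin n) + i) := by
        rw [← Fin.prod_univ_eq_prod_range (fun j : ℕ => v ((j : Fin n) + i)) n]
        exact Finset.prod_congr rfl fun k _ => by rw [Fin.cast_val_eq_self]
    _ = ∏ k, v k := Equiv.prod_comp (Equiv.addRight i) v






lemma sgn_mul_self : sgn n * sgn n = 1 := by
  rw [sgn]
  rcases Int.units_eq_one_or (Equiv.Perm.sign (tau n)) with h | h <;> rw [h] <;> norm_num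


lemma prod_sfun : ∏ i, sfun n i = sgn n := by
  show (∏ i : Fin n, if i = 0 then sgn n else 1) = sgn n
  rw [Finset.prod_ite_eq' Finset.univ (0 : Fin n) (fun _ => sgn n)]
  simp

lemma det_Pmat : (Pmat n).det = sgn n := by
  rw [Pmat, sgn]
  have := Matrix.det_permutation (R := ℝ) (tau n)
  simpa using this


lemma det_Cmat : (Cmat n).det = 1 := by
  rw [Cmat, Matrix.det_mul, det_diagonal, prod_sfun, det_Pmat, sgn_mul_self]

lemma Pmat_pow_eq (m : ℕ) :
    Pmat n ^ m = (Equiv.addLeft (m : Fin n)).toPEquiv.toMatrix := by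
  induction m with
  | zero =>
    simp only [pow_zero, Nat.cast_zero]
    have : Equiv.addLeft (0 : Fin n) = Equiv.refl (Fin n) := by
      ext x; simp
    rw [this, Equiv.toPEquiv_refl, PEquiv.toMatrix_refl]
  | succ k ih =>
    rw [pow_succ, ih, Pmat, ← PEquiv.toMatrix_trans, ← Equiv.toPEquiv_trans]
    have : (Equiv.addLeft ((k : Fin n))).trans (tau n) = Equiv.addLeft ((k+1 : ℕ) : Fin n) := by
      ext x
      simp only [Equiv.trans_apply, Equiv.coe_addLeft, tau]
      push_cast
      ring
    rw [this]

lemma Pmat_pow_entry (m : ℕ) (i j : Fin n) : |(Pmat n ^ m) i j| ≤ 1 := by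
  rw [Pmat_pow_eq, PEquiv.toMatrix_apply]
  split <;> norm_num





lemma sgn_cases : sgn n = 1 ∨ sgn n = -1 := by
  rcases Int.units_eq_one_or (Equiv.Perm.sign (tau n)) with h | h <;>
    [left; right] <;> simp [sgn, h]

lemma abs_sfun (i : Fin n) : |sfun n i| ≤ 1 := by
  rw [sfun]
  rcases sgn_cases (n := n) with h | h <;> split <;> simp [h]

lemma Cmat_pow (m : ℕ) :
    Cmat n ^ m
      = diagonal (fun i => ∏ j ∈ Finset.range m, sfun n ((tau n)^[j] i)) * Pmat n ^ m := by
  rw [Cmat, diag_mul_Pmat_pow]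

lemma Cmat_pow_entry (m : ℕ) (i j : Fin n) : |(Cmat n ^ m) i j| ≤ 1 := by
  rw [Cmat_pow, Matrix.diagonal_mul, abs_mul]
  have h1 : |∏ j ∈ Finset.range m, sfun n ((tau n)^[j] i)| ≤ 1 := by
    rw [Finset.abs_prod]
    exact Finset.prod_le_one (fun k _ => abs_nonneg _) (fun k _ => abs_sfun _)
  exact mul_le_one₀ h1 (abs_nonneg _) (Pmat_pow_entry m i j)

lemma Cmat_pow_2n : Cmat n ^ (2*n) = 1 := by
  rw [Cmat_pow]
  have hP : Pmat n ^ (2*n) = 1 := by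
    rw [Pmat_pow_eq]
    have h0 : ((2*n : ℕ) : Fin n) = 0 := by
      push_cast
      rw [Fin.natCast_self]
      ring
    rw [h0]
    have : Equiv.addLeft (0 : Fin n) = Equiv.refl (Fin n) := by ext x; simp
    rw [this, Equiv.toPEquiv_refl, PEquiv.toMatrix_refl]
  have hw : (fun i => ∏ j ∈ Finset.range (2*n), sfun n ((tau n)^[j] i)) = fun _ => (1:ℝ) := by
    funext i
    rw [two_mul, Finset.prod_range_add]
    have h2 : ∀ j : ℕ, sfun n ((tau n)^[n + j] i) = sfun n ((tau n)^[j] i) := by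
      intro j
      rw [tau_iterate, tau_iterate]
      congr 1
      push_cast
      rw [Fin.natCast_self]
      ring
    rw [Finset.prod_congr rfl (fun j _ => h2 j), prod_tau, prod_sfun, sgn_mul_self]
  rw [hw, hP, mul_one]
  exact Matrix.diagonal_one
lemma diag_mul_Cmat_pow_n (v : Fin n → ℝ) (hv : ∏ i, v i = 1) :
    (diagonal v * Cmat n) ^ n = Cmat n ^ n := by
  rw [Cmat_pow, Cmat, ← mul_assoc, diagonal_mul_diagonal, diag_mul_Pmat_pow]
  congr 1
  have h1 : (fun i => ∏ j ∈ Finset.range n, v ((tau n)^[j] i) * sfun n ((tau n)^[j] i))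
      = fun i => ∏ j ∈ Finset.range n, sfun n ((tau n)^[j] i) := by
    funext i
    rw [Finset.prod_mul_distrib, prod_tau v, hv, one_mul]
  rw [h1]


lemma diag_eq_one {w : Fin n → ℝ} (hw : ∀ i, w i = 1) : diagonal w = 1 := by
  rw [show w = fun _ => (1:ℝ) from funext hw]
  exact Matrix.diagonal_one

lemma svd (h : SL n) : ∃ (k₁ k₂ : SL n) (v : Fin n → ℝ),
    (∀ i, 0 < v i) ∧ (∏ i, v i) = 1 ∧ (h : MM n) = (k₁ : MM n) * diagonal v * k₂ ∧
    (k₁ : MM n)ᵀ * k₁ = 1 ∧ (k₁ : MM n) * (k₁ : MM n)ᵀ = 1 ∧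
    (k₂ : MM n)ᵀ * k₂ = 1 ∧ (k₂ : MM n) * (k₂ : MM n)ᵀ = 1 := by
  set A : MM n := (h : MM n) with hA
  have hdetA : A.det = 1 := h.2
  have hherm : (Aᴴ * A).IsHermitian := Matrix.isHermitian_conjTranspose_mul_self A
  set μ : Fin n → ℝ := hherm.eigenvalues with hμ
  have hμnn : ∀ i, 0 ≤ μ i := fun i => Matrix.eigenvalues_conjTranspose_mul_self_nonneg A i
  have hdetS : (Aᴴ * A).det = 1 := by
    rw [Matrix.det_mul]
    have h3 : (Aᴴ).det = 1 := by
      have h4 : Aᴴ = Aᵀ := rfl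
      rw [h4, Matrix.det_transpose, hdetA]
    rw [h3, hdetA, one_mul]
  have hprodμ : ∏ i, μ i = 1 := by
    have h5 := hherm.det_eq_prod_eigenvalues
    rw [hdetS] at h5
    have h2 : ∀ i, (RCLike.ofReal (hherm.eigenvalues i) : ℝ) = μ i := fun i => rfl
    rw [Finset.prod_congr rfl (fun i _ => h2 i)] at h5
    exact h5.symm
  have hμpos : ∀ i, 0 < μ i := by
    intro i
    rcases lt_or_eq_of_le (hμnn i) with h' | h'
    · exact h'
    · exfalso
      have h6 : ∏ j, μ j = 0 := Finset.prod_eq_zero (Finset.mem_univ i) h'.symm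
      rw [hprodμ] at h6
      norm_num at h6
  set v : Fin n → ℝ := fun i => Real.sqrt (μ i) with hv
  have hvpos : ∀ i, 0 < v i := fun i => Real.sqrt_pos.2 (hμpos i)
  have hvsq : ∀ i, v i * v i = μ i := fun i => Real.mul_self_sqrt (hμnn i)
  have hprodv : ∏ i, v i = 1 := by
    have h1 : (∏ i, v i) ^ 2 = 1 := by
      rw [← Finset.prod_pow]
      have h7 : ∀ i, v i ^ 2 = μ i := fun i => by rw [sq, hvsq]
      rw [Finset.prod_congr rfl (fun i _ => h7 i), hprodμ]
    have h2 : 0 ≤ ∏ i, v i := Finset.prod_nonneg (fun i _ => (hvpos i).le)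
    nlinarith
  set U : MM n := (hherm.eigenvectorUnitary : MM n) with hU
  have hUstar : U * Uᵀ = 1 ∧ Uᵀ * U = 1 := by
    constructor
    · exact (Matrix.mem_unitaryGroup_iff).1 hherm.eigenvectorUnitary.2
    · exact Matrix.UnitaryGroup.star_mul_self hherm.eigenvectorUnitary
  have hspec : Aᴴ * A = U * diagonal μ * Uᵀ := by
    have h8 := hherm.spectral_theorem
    rw [Unitary.conjStarAlgAut_apply] at h8
    rw [h8]; rfl
  set e : ℝ := U.det with he
  have he2 : e * e = 1 := by
    have h1 : (U * Uᵀ).det = 1 := by rw [hUstar.1, Matrix.det_one]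
    rw [Matrix.det_mul, Matrix.det_transpose] at h1
    exact h1
  set ε : MM n := diagonal (fun i => if i = 0 then e else 1) with hε
  have hεε : ε * ε = 1 := by
    rw [hε, diagonal_mul_diagonal]
    exact diag_eq_one (fun i => by split <;> simp [he2])
  have hεT : εᵀ = ε := Matrix.diagonal_transpose _
  have hdetε : ε.det = e := by
    rw [hε, det_diagonal]
    simp
  set dinv : MM n := diagonal (fun i => (v i)⁻¹) with hdinv
  have hdd : dinv * diagonal v = 1 := by
    rw [hdinv, diagonal_mul_diagonal]
    exact diag_eq_one (fun i => inv_mul_cancel₀ (hvpos i).ne')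
  have hdetdinv : dinv.det = 1 := by
    rw [hdinv, det_diagonal]
    rw [show ∏ i, (v i)⁻¹ = (∏ i, v i)⁻¹ by rw [← Finset.prod_inv_distrib], hprodv, inv_one]
  have hdetU : U.det = e := rfl
  set k2m : MM n := ε * Uᵀ with hk2m
  set k1m : MM n := A * U * ε * dinv with hk1m
  have hdetk2 : k2m.det = 1 := by
    rw [hk2m, Matrix.det_mul, Matrix.det_transpose, hdetε, hdetU, he2]
  have hdetk1 : k1m.det = 1 := by
    rw [hk1m, Matrix.det_mul, Matrix.det_mul, Matrix.det_mul, hdetA, hdetU, hdetε, hdetdinv]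
    rw [one_mul, mul_one, he2]
  have hk1t : k1mᵀ = dinv * ε * Uᵀ * Aᵀ := by
    rw [hk1m, Matrix.transpose_mul, Matrix.transpose_mul, Matrix.transpose_mul, hεT,
      Matrix.diagonal_transpose, ← mul_assoc, ← mul_assoc]
  have horth1 : k1mᵀ * k1m = 1 := by
    rw [hk1t, hk1m]
    have hAtA : Aᵀ * A = U * diagonal μ * Uᵀ := hspec
    calc dinv * ε * Uᵀ * Aᵀ * (A * U * ε * dinv)
        = dinv * ε * (Uᵀ * (Aᵀ * A) * U) * (ε * dinv) := by noncomm_ring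
      _ = dinv * ε * diagonal μ * (ε * dinv) := by
          rw [hAtA]
          have h9 : Uᵀ * (U * diagonal μ * Uᵀ) * U = diagonal μ := by
            calc Uᵀ * (U * diagonal μ * Uᵀ) * U
                = (Uᵀ * U) * diagonal μ * (Uᵀ * U) := by noncomm_ring
              _ = diagonal μ := by rw [hUstar.2, one_mul, mul_one]
          rw [h9]
      _ = 1 := by
          rw [hdinv, hε, diagonal_mul_diagonal, diagonal_mul_diagonal, diagonal_mul_diagonal,
            diagonal_mul_diagonal]
          refine diag_eq_one (fun i => ?_)
          have hvne : v i ≠ 0 := (hvpos i).ne'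
          have hμi : μ i = v i * v i := (hvsq i).symm
          split
          · rw [hμi]; field_simp; nlinarith [he2]
          · rw [hμi]; field_simp
  refine ⟨⟨k1m, hdetk1⟩, ⟨k2m, hdetk2⟩, v, hvpos, hprodv, ?_, horth1, ?_, ?_, ?_⟩
  · show A = k1m * diagonal v * k2m
    rw [hk1m, hk2m]
    calc A = A * (U * Uᵀ) := by rw [hUstar.1, mul_one]
      _ = A * U * (ε * ε) * Uᵀ := by rw [hεε, mul_one]; noncomm_ring
      _ = A * U * ε * (dinv * diagonal v) * (ε * Uᵀ) := by rw [hdd, mul_one]; noncomm_ring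
      _ = A * U * ε * dinv * diagonal v * (ε * Uᵀ) := by noncomm_ring
  · exact (mul_eq_one_comm).1 horth1
  · show k2mᵀ * k2m = 1
    rw [hk2m, Matrix.transpose_mul, hεT, Matrix.transpose_transpose]
    calc U * ε * (ε * Uᵀ) = U * (ε * ε) * Uᵀ := by noncomm_ring
      _ = 1 := by rw [hεε, mul_one, hUstar.1]
  · show k2m * k2mᵀ = 1
    rw [hk2m, Matrix.transpose_mul, hεT, Matrix.transpose_transpose]
    calc ε * Uᵀ * (U * ε) = ε * (Uᵀ * U) * ε := by noncomm_ring
      _ = 1 := by rw [hUstar.2, mul_one, hεε]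


lemma word1_group {G : Type*} [Group G] {h κ₁ κ₂ δ γ : G} {n : ℕ} (hn : 1 ≤ n)
    (hh : h = κ₁ * δ * κ₂) (hc : (δ * γ)^n = γ^n) (h2n : γ^(2*n) = 1) :
    κ₁⁻¹ * (h * (κ₂⁻¹ * γ * κ₁⁻¹))^(n-1) * h * (κ₂⁻¹ * γ^(n+1)) = 1 := by
  subst hh
  have key : κ₁ * δ * κ₂ * (κ₂⁻¹ * γ * κ₁⁻¹) = κ₁ * (δ * γ) * κ₁⁻¹ := by group
  rw [key, conj_pow]
  have main : κ₁⁻¹ * (κ₁ * (δ * γ)^(n-1) * κ₁⁻¹) * (κ₁ * δ * κ₂) * (κ₂⁻¹ * γ^(n+1))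
      = (δ * γ)^(n-1) * (δ * γ) * γ^n := by group
  rw [main, ← pow_succ, Nat.sub_add_cancel hn, hc, ← pow_add, ← two_mul, h2n]

lemma word2_group {G : Type*} [Group G] {h κ₁ κ₂ δ : G} {n : ℕ} (hn : 1 ≤ n)
    (hh : h = κ₁ * δ * κ₂) :
    (h * (κ₂⁻¹ * κ₁⁻¹))^(n-1) * h = κ₁ * δ^n * κ₂ := by
  subst hh
  have key : κ₁ * δ * κ₂ * (κ₂⁻¹ * κ₁⁻¹) = κ₁ * δ * κ₁⁻¹ := by group
  rw [key, conj_pow]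
  have main : κ₁ * δ^(n-1) * κ₁⁻¹ * (κ₁ * δ * κ₂) = κ₁ * (δ^(n-1) * δ) * κ₂ := by group
  rw [main, ← pow_succ, Nat.sub_add_cancel hn]

lemma Lpow {G : Type*} [Monoid G] {L : G → ℝ} (hsub : ∀ x y, L (x * y) ≤ L x + L y)
    (x : G) : ∀ k : ℕ, 1 ≤ k → L (x^k) ≤ k * L x := by
  intro k hk
  induction k with
  | zero => omega
  | succ m ih =>
    rcases Nat.eq_or_lt_of_le hk with h1 | h1
    · simp [← h1]
    · have hm : 1 ≤ m := by omega
      have := ih hm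
      calc L (x^(m+1)) = L (x^m * x) := by rw [pow_succ]
        _ ≤ L (x^m) + L x := hsub _ _
        _ ≤ m * L x + L x := by linarith
        _ = (m+1 : ℕ) * L x := by push_cast; ring

end NZ
end Stmt16Aux
end Stmt16Aux

section MoreAux
namespace Stmt16Aux
open Matrix
variable {n : ℕ}

lemma entry_mul_bound' {A B : MM n} {a b : ℝ} (ha : ∀ i j, |A i j| ≤ a)
    (hb : ∀ i j, |B i j| ≤ b) (ha0 : 0 ≤ a) (i j : Fin n) :
    |(A * B) i j| ≤ n * a * b := by
  have := entry_mul_bound ha hb ha0 i j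
  calc |(A * B) i j| ≤ n * (a * b) := this
    _ = n * a * b := by ring

lemma entry3 {X Y Z : MM n} {x y z : ℝ} (hx : ∀ i j, |X i j| ≤ x)
    (hy : ∀ i j, |Y i j| ≤ y) (hz : ∀ i j, |Z i j| ≤ z)
    (hx0 : 0 ≤ x) (hy0 : 0 ≤ y) (i j : Fin n) :
    |(X * Y * Z) i j| ≤ (n:ℝ)^2 * x * y * z := by
  have h1 : ∀ i j, |(X * Y) i j| ≤ n * x * y := entry_mul_bound' hx hy hx0
  have h2 := entry_mul_bound' h1 hz (by positivity) i j
  calc |(X * Y * Z) i j| ≤ n * ((n:ℝ) * x * y) * z := h2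
    _ = (n:ℝ)^2 * x * y * z := by ring

lemma inv_coe {k : SL n} (hk : (k : MM n) * (k : MM n)ᵀ = 1) :
    ((k⁻¹ : SL n) : MM n) = (k : MM n)ᵀ := by
  have hdet : ((k : MM n)ᵀ).det = 1 := by rw [Matrix.det_transpose]; exact k.2
  let k' : SL n := ⟨(k : MM n)ᵀ, hdet⟩
  have hmul : k * k' = 1 := by
    apply Subtype.ext
    rw [Matrix.SpecialLinearGroup.coe_mul]
    show (k : MM n) * (k : MM n)ᵀ = ((1 : SL n) : MM n)
    rw [hk, Matrix.SpecialLinearGroup.coe_one]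
  rw [inv_eq_of_mul_eq_one_right hmul]

variable [NeZero n]

lemma Cmat_entry (i j : Fin n) : |Cmat n i j| ≤ 1 := by
  have := Cmat_pow_entry (n := n) 1 i j
  rwa [pow_one] at this

end Stmt16Aux
end MoreAux

set_option maxHeartbeats 1600000

/-- a semigroup length on `SL(n, ℝ) × A` (with `A` locally compact)
which is proper on `SL(n, ℝ) × {1}` and on `{1} × A` is proper. -/
theorem stmt_16 (n : ℕ) (hn : 2 ≤ n) {A : Type*} [Group A] [TopologicalSpace A]
    [IsTopologicalGroup A] [LocallyCompactSpace A]
    (L : Matrix.SpecialLinearGroup (Fin n) ℝ × A → ℝ)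
    (hL : IsSemigroupLength L)
    (hH : ∀ c : ℝ, IsCompact
      (closure {h : Matrix.SpecialLinearGroup (Fin n) ℝ | L (h, 1) ≤ c}))
    (hA : ∀ c : ℝ, IsCompact (closure {a : A | L (1, a) ≤ c})) :
    IsProperLength L := by
  classical
  open Stmt16Aux Matrix in
  haveI : NeZero n := ⟨by omega⟩
  obtain ⟨Lnn, Lcpt, Lsub⟩ := hL
  have hn1 : 1 ≤ n := by omega
  have hnR : (1:ℝ) ≤ (n:ℝ) := by exact_mod_cast hn1
  have hn2R : (1:ℝ) ≤ (n:ℝ)^2 := by nlinarith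
  have hnn2R : (n:ℝ) ≤ (n:ℝ)^2 := by nlinarith
  intro c
  -- uniform constants
  set R₀ : ℝ := (n:ℝ)^2 with hR₀def
  obtain ⟨M₀, hM₀⟩ := Lcpt ((SLbd n R₀) ×ˢ ({1} : Set A))
    ((isCompact_SLbd R₀).prod isCompact_singleton)
  set C₁ : ℝ := ((n-1 : ℕ) : ℝ) * (c + M₀) + c + 2 * M₀ with hC₁def
  set SA : Set A := closure {a : A | L (1, a) ≤ C₁} with hSAdef
  have hSAcpt : IsCompact SA := hA C₁
  have hSAinvcpt : IsCompact (SA⁻¹) := hSAcpt.inv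
  obtain ⟨M₁, hM₁⟩ := Lcpt (({(1 : SL n)} : Set (SL n)) ×ˢ SA⁻¹)
    (isCompact_singleton.prod hSAinvcpt)
  set C₂ : ℝ := ((n-1 : ℕ) : ℝ) * (c + M₀) + c + M₁ with hC₂def
  set TH : Set (SL n) := closure {h : SL n | L (h, 1) ≤ C₂} with hTHdef
  have hTHcpt : IsCompact TH := hH C₂
  -- entrywise bound on TH
  obtain ⟨R₁, hR₁0, hR₁⟩ : ∃ R₁ : ℝ, 0 ≤ R₁ ∧ ∀ x ∈ TH, ∀ i j, |(x : MM n) i j| ≤ R₁ := by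
    have hcont : ContinuousOn (fun x : SL n => ∑ i, ∑ j, |(x : MM n) i j|) TH := by
      apply Continuous.continuousOn
      apply continuous_finset_sum
      intro i _
      apply continuous_finset_sum
      intro j _
      exact ((continuous_apply j).comp ((continuous_apply i).comp isClosedEmbedding_val.continuous)).abs
    obtain ⟨C0, hC0⟩ := hTHcpt.exists_bound_of_continuousOn hcont
    refine ⟨max C0 0, le_max_right _ _, fun x hx i j => ?_⟩
    have h1 : |(x : MM n) i j| ≤ ∑ j', |(x : MM n) i j'| :=
      Finset.single_le_sum (f := fun j' => |(x : MM n) i j'|)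
        (fun k _ => abs_nonneg _) (Finset.mem_univ j)
    have h2 : (∑ j', |(x : MM n) i j'|) ≤ ∑ i', ∑ j', |(x : MM n) i' j'| :=
      Finset.single_le_sum (f := fun i' => ∑ j', |(x : MM n) i' j'|)
        (fun k _ => Finset.sum_nonneg fun _ _ => abs_nonneg _) (Finset.mem_univ i)
    have h3 := hC0 x hx
    have h4 : (∑ i', ∑ j', |(x : MM n) i' j'|) ≤ C0 := by
      calc (∑ i', ∑ j', |(x : MM n) i' j'|)
          ≤ ‖∑ i', ∑ j', |(x : MM n) i' j'|‖ := le_abs_self _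
        _ ≤ C0 := h3
    calc |(x : MM n) i j| ≤ C0 := by linarith
      _ ≤ max C0 0 := le_max_left _ _
  set B : ℝ := (n:ℝ)^2 * R₁ with hBdef
  set maxB : ℝ := max 1 B with hmaxBdef
  have hmaxB1 : (1:ℝ) ≤ maxB := le_max_left _ _
  have hmaxB0 : (0:ℝ) ≤ maxB := by linarith
  set R₂ : ℝ := (n:ℝ)^2 * maxB with hR₂def
  set R₃ : ℝ := (n:ℝ)^2 * maxB^(n-1) with hR₃def
  obtain ⟨M₂, hM₂⟩ := Lcpt ((SLbd n R₃) ×ˢ ({1} : Set A))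
    ((isCompact_SLbd R₃).prod isCompact_singleton)
  set C₃ : ℝ := M₂ + c with hC₃def
  -- the key pointwise claim
  have key : ∀ p : SL n × A, L p ≤ c → p.1 ∈ SLbd n R₂ ∧ L (1, p.2) ≤ C₃ := by
    rintro ⟨h, a⟩ hp
    obtain ⟨κ₁, κ₂, v, hvpos, hv, hmat, hk1o, hk1o', hk2o, hk2o'⟩ := svd h
    have hk1T : ∀ i j, |(κ₁ : MM n)ᵀ i j| ≤ 1 :=
      orth_entry (by rw [Matrix.transpose_transpose]; exact hk1o')
    have hk2T : ∀ i j, |(κ₂ : MM n)ᵀ i j| ≤ 1 :=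
      orth_entry (by rw [Matrix.transpose_transpose]; exact hk2o')
    have hk1E : ∀ i j, |(κ₁ : MM n) i j| ≤ 1 := orth_entry hk1o
    have hk2E : ∀ i j, |(κ₂ : MM n) i j| ≤ 1 := orth_entry hk2o
    set δ : SL n := ⟨diagonal v, by rw [det_diagonal]; exact hv⟩ with hδdef
    set γ : SL n := ⟨Cmat n, det_Cmat⟩ with hγdef
    have hhe : h = κ₁ * δ * κ₂ := by
      apply Subtype.ext
      rw [Matrix.SpecialLinearGroup.coe_mul, Matrix.SpecialLinearGroup.coe_mul]
      exact hmat
    have hcyc : (δ * γ)^n = γ^n := by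
      apply Subtype.ext
      rw [Matrix.SpecialLinearGroup.coe_pow, Matrix.SpecialLinearGroup.coe_pow,
        Matrix.SpecialLinearGroup.coe_mul]
      exact diag_mul_Cmat_pow_n v hv
    have hγ2n : γ^(2*n) = 1 := by
      apply Subtype.ext
      rw [Matrix.SpecialLinearGroup.coe_pow, Matrix.SpecialLinearGroup.coe_one]
      exact Cmat_pow_2n
    have hk1inv : ((κ₁⁻¹ : SL n) : MM n) = (κ₁ : MM n)ᵀ := inv_coe hk1o'
    have hk2inv : ((κ₂⁻¹ : SL n) : MM n) = (κ₂ : MM n)ᵀ := inv_coe hk2o'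
    have hγpowE : ∀ m : ℕ, ∀ i j, |((γ^m : SL n) : MM n) i j| ≤ 1 := by
      intro m i j
      rw [Matrix.SpecialLinearGroup.coe_pow]
      exact Cmat_pow_entry m i j
    have hγE : ∀ i j, |((γ : SL n) : MM n) i j| ≤ 1 := Cmat_entry
    -- spacer memberships
    have hu_mem : (κ₂⁻¹ * γ * κ₁⁻¹ : SL n) ∈ SLbd n R₀ := by
      intro i j
      rw [Matrix.SpecialLinearGroup.coe_mul, Matrix.SpecialLinearGroup.coe_mul,
        hk1inv, hk2inv]
      have := entry3 hk2T hγE hk1T zero_le_one zero_le_one i j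
      calc |((κ₂ : MM n)ᵀ * (γ : MM n) * (κ₁ : MM n)ᵀ) i j| ≤ (n:ℝ)^2 * 1 * 1 * 1 := this
        _ = R₀ := by rw [hR₀def]; ring
    have hs0_mem : (κ₁⁻¹ : SL n) ∈ SLbd n R₀ := by
      intro i j
      rw [hk1inv]
      exact le_trans (hk1T i j) (by rw [hR₀def]; nlinarith)
    have hs2_mem : (κ₂⁻¹ * γ^(n+1) : SL n) ∈ SLbd n R₀ := by
      intro i j
      rw [Matrix.SpecialLinearGroup.coe_mul, hk2inv]
      have := entry_mul_bound' hk2T (hγpowE (n+1)) zero_le_one i j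
      calc |((κ₂ : MM n)ᵀ * ((γ^(n+1) : SL n) : MM n)) i j| ≤ n * 1 * 1 := this
        _ ≤ R₀ := by rw [hR₀def]; nlinarith
    have hx_mem : (κ₂⁻¹ * κ₁⁻¹ : SL n) ∈ SLbd n R₀ := by
      intro i j
      rw [Matrix.SpecialLinearGroup.coe_mul, hk1inv, hk2inv]
      have := entry_mul_bound' hk2T hk1T zero_le_one i j
      calc |((κ₂ : MM n)ᵀ * (κ₁ : MM n)ᵀ) i j| ≤ n * 1 * 1 := this
        _ ≤ R₀ := by rw [hR₀def]; nlinarith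
    -- word 1 : bound L (1, a^n)
    have w1H : κ₁⁻¹ * (h * (κ₂⁻¹ * γ * κ₁⁻¹))^(n-1) * h * (κ₂⁻¹ * γ^(n+1)) = 1 :=
      word1_group hn1 hhe hcyc hγ2n
    have w1 : ((κ₁⁻¹ : SL n), (1:A)) * (((h, a) : SL n × A) * (κ₂⁻¹ * γ * κ₁⁻¹, 1))^(n-1)
        * ((h, a) : SL n × A) * ((κ₂⁻¹ * γ^(n+1) : SL n), (1:A)) = ((1 : SL n), a^n) := by
      simp only [Prod.mk_mul_mk, Prod.pow_mk, Prod.mk.injEq]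
      constructor
      · exact w1H
      · rw [mul_one, one_mul, mul_one, ← pow_succ, Nat.sub_add_cancel hn1]
    have est_gu : L (((h, a) : SL n × A) * (κ₂⁻¹ * γ * κ₁⁻¹, 1)) ≤ c + M₀ := by
      calc L (((h, a) : SL n × A) * (κ₂⁻¹ * γ * κ₁⁻¹, 1))
          ≤ L (h, a) + L ((κ₂⁻¹ * γ * κ₁⁻¹ : SL n), (1:A)) := Lsub _ _
        _ ≤ c + M₀ := add_le_add hp (hM₀ _ ⟨hu_mem, rfl⟩)
    have est_pow : L ((((h, a) : SL n × A) * (κ₂⁻¹ * γ * κ₁⁻¹, 1))^(n-1))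
        ≤ ((n-1:ℕ):ℝ) * (c + M₀) := by
      have h1 := Lpow Lsub (((h, a) : SL n × A) * (κ₂⁻¹ * γ * κ₁⁻¹, 1)) (n-1) (by omega)
      calc L ((((h, a) : SL n × A) * (κ₂⁻¹ * γ * κ₁⁻¹, 1))^(n-1))
          ≤ ((n-1:ℕ):ℝ) * L (((h, a) : SL n × A) * (κ₂⁻¹ * γ * κ₁⁻¹, 1)) := h1
        _ ≤ ((n-1:ℕ):ℝ) * (c + M₀) := by
            apply mul_le_mul_of_nonneg_left est_gu (by positivity)
    have est1 : L ((1 : SL n), a^n) ≤ C₁ := by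
      rw [← w1]
      have s1 := Lsub ((κ₁⁻¹ : SL n), (1:A))
        ((((h, a) : SL n × A) * (κ₂⁻¹ * γ * κ₁⁻¹, 1))^(n-1))
      have s2 := Lsub (((κ₁⁻¹ : SL n), (1:A)) *
        ((((h, a) : SL n × A) * (κ₂⁻¹ * γ * κ₁⁻¹, 1))^(n-1))) ((h, a) : SL n × A)
      have s3 := Lsub (((κ₁⁻¹ : SL n), (1:A)) *
        ((((h, a) : SL n × A) * (κ₂⁻¹ * γ * κ₁⁻¹, 1))^(n-1)) * ((h, a) : SL n × A))
        ((κ₂⁻¹ * γ^(n+1) : SL n), (1:A))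
      have b0 : L ((κ₁⁻¹ : SL n), (1:A)) ≤ M₀ := hM₀ _ ⟨hs0_mem, rfl⟩
      have b2 : L ((κ₂⁻¹ * γ^(n+1) : SL n), (1:A)) ≤ M₀ := hM₀ _ ⟨hs2_mem, rfl⟩
      rw [hC₁def]
      linarith
    have han_mem : a^n ∈ SA := by
      rw [hSAdef]
      exact subset_closure est1
    have haninv : ((a^n)⁻¹ : A) ∈ SA⁻¹ := by
      rw [Set.mem_inv, inv_inv]
      exact han_mem
    have b3 : L ((1 : SL n), (a^n)⁻¹) ≤ M₁ := hM₁ _ ⟨rfl, haninv⟩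
    -- word 2 : bound the diagonal
    have w2H : (h * (κ₂⁻¹ * κ₁⁻¹))^(n-1) * h = κ₁ * δ^n * κ₂ := word2_group hn1 hhe
    have w2 : (((h, a) : SL n × A) * ((κ₂⁻¹ * κ₁⁻¹ : SL n), (1:A)))^(n-1)
        * ((h, a) : SL n × A) * ((1 : SL n), (a^n)⁻¹) = ((κ₁ * δ^n * κ₂ : SL n), (1:A)) := by
      simp only [Prod.mk_mul_mk, Prod.pow_mk, Prod.mk.injEq]
      constructor
      · rw [mul_one]
        exact w2H
      · rw [mul_one, ← pow_succ, Nat.sub_add_cancel hn1, mul_inv_cancel]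
    have est2 : L ((κ₁ * δ^n * κ₂ : SL n), (1:A)) ≤ C₂ := by
      rw [← w2]
      have est_gx : L (((h, a) : SL n × A) * ((κ₂⁻¹ * κ₁⁻¹ : SL n), (1:A))) ≤ c + M₀ :=
        le_trans (Lsub _ _) (add_le_add hp (hM₀ _ ⟨hx_mem, rfl⟩))
      have est_pow2 : L ((((h, a) : SL n × A) * ((κ₂⁻¹ * κ₁⁻¹ : SL n), (1:A)))^(n-1))
          ≤ ((n-1:ℕ):ℝ) * (c + M₀) := by
        have h1 := Lpow Lsub (((h, a) : SL n × A) * ((κ₂⁻¹ * κ₁⁻¹ : SL n), (1:A))) (n-1) (by omega)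
        calc L ((((h, a) : SL n × A) * ((κ₂⁻¹ * κ₁⁻¹ : SL n), (1:A)))^(n-1))
            ≤ ((n-1:ℕ):ℝ) * L (((h, a) : SL n × A) * ((κ₂⁻¹ * κ₁⁻¹ : SL n), (1:A))) := h1
          _ ≤ ((n-1:ℕ):ℝ) * (c + M₀) := mul_le_mul_of_nonneg_left est_gx (by positivity)
      have s1 := Lsub ((((h, a) : SL n × A) * ((κ₂⁻¹ * κ₁⁻¹ : SL n), (1:A)))^(n-1))
        ((h, a) : SL n × A)
      have s2 := Lsub ((((h, a) : SL n × A) * ((κ₂⁻¹ * κ₁⁻¹ : SL n), (1:A)))^(n-1)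
        * ((h, a) : SL n × A)) ((1 : SL n), (a^n)⁻¹)
      rw [hC₂def]
      linarith
    have hW_mem : (κ₁ * δ^n * κ₂ : SL n) ∈ TH := by
      rw [hTHdef]
      exact subset_closure est2
    have hWE : ∀ i j, |((κ₁ * δ^n * κ₂ : SL n) : MM n) i j| ≤ R₁ := hR₁ _ hW_mem
    -- extract diagonal bound
    have hδn_eq : (δ^n : SL n) = κ₁⁻¹ * (κ₁ * δ^n * κ₂) * κ₂⁻¹ := by group
    have hδnE : ∀ i j, |((δ^n : SL n) : MM n) i j| ≤ B := by
      intro i j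
      rw [hδn_eq, Matrix.SpecialLinearGroup.coe_mul, Matrix.SpecialLinearGroup.coe_mul,
        hk1inv, hk2inv]
      have := entry3 hk1T hWE hk2T zero_le_one hR₁0 i j
      calc |((κ₁ : MM n)ᵀ * ((κ₁ * δ^n * κ₂ : SL n) : MM n) * (κ₂ : MM n)ᵀ) i j|
          ≤ (n:ℝ)^2 * 1 * R₁ * 1 := this
        _ = B := by rw [hBdef]; ring
    have hvn : ∀ i, v i ^ n ≤ B := by
      intro i
      have h1 : ((δ^n : SL n) : MM n) i i = v i ^ n := by
        rw [Matrix.SpecialLinearGroup.coe_pow]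
        show ((diagonal v) ^ n) i i = v i ^ n
        rw [Matrix.diagonal_pow, Matrix.diagonal_apply_eq]
        rfl
      have h2 := hδnE i i
      rw [h1] at h2
      exact le_trans (le_abs_self _) h2
    have hvB : ∀ i, v i ≤ maxB := by
      intro i
      rcases le_or_gt (v i) 1 with h1 | h1
      · exact le_trans h1 hmaxB1
      · have h2 : v i ≤ v i ^ n := le_self_pow₀ h1.le (by omega)
        exact le_trans (le_trans h2 (hvn i)) (le_max_right _ _)
    have hdiagE : ∀ i j, |diagonal v i j| ≤ maxB := by
      intro i j
      rw [Matrix.diagonal_apply]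
      split
      · rw [abs_of_pos (hvpos i)]
        exact hvB i
      · simpa using hmaxB0
    -- h is bounded
    have hhE : h ∈ SLbd n R₂ := by
      intro i j
      rw [hmat]
      have := entry3 hk1E hdiagE hk2E zero_le_one hmaxB0 i j
      calc |((κ₁ : MM n) * diagonal v * (κ₂ : MM n)) i j| ≤ (n:ℝ)^2 * 1 * maxB * 1 := this
        _ = R₂ := by rw [hR₂def]; ring
    -- h⁻¹ is bounded
    have hvinv : ∀ i, (v i)⁻¹ ≤ maxB^(n-1) := by
      intro i
      have hprod : v i * ∏ j ∈ Finset.univ.erase i, v j = 1 := by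
        rw [Finset.mul_prod_erase Finset.univ v (Finset.mem_univ i)]
        exact hv
      have heq : (v i)⁻¹ = ∏ j ∈ Finset.univ.erase i, v j :=
        inv_eq_of_mul_eq_one_right hprod
      rw [heq]
      calc ∏ j ∈ Finset.univ.erase i, v j ≤ ∏ _j ∈ Finset.univ.erase i, maxB :=
            Finset.prod_le_prod (fun k _ => (hvpos k).le) (fun k _ => hvB k)
        _ = maxB ^ (Finset.univ.erase i).card := by rw [Finset.prod_const]
        _ = maxB ^ (n-1) := by
            rw [Finset.card_erase_of_mem (Finset.mem_univ i), Finset.card_univ, Fintype.card_fin]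
    set δ' : SL n := ⟨diagonal (fun i => (v i)⁻¹), by
      rw [det_diagonal, show ∏ i, (v i)⁻¹ = (∏ i, v i)⁻¹ by rw [← Finset.prod_inv_distrib],
        hv, inv_one]⟩ with hδ'def
    have hδδ' : δ * δ' = 1 := by
      apply Subtype.ext
      rw [Matrix.SpecialLinearGroup.coe_mul, Matrix.SpecialLinearGroup.coe_one]
      show diagonal v * diagonal (fun i => (v i)⁻¹) = 1
      rw [diagonal_mul_diagonal]
      exact diag_eq_one (fun i => mul_inv_cancel₀ (hvpos i).ne')
    have hinvh : h⁻¹ = κ₂⁻¹ * δ' * κ₁⁻¹ := by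
      have hmul : h * (κ₂⁻¹ * δ' * κ₁⁻¹) = 1 := by
        rw [hhe]
        calc κ₁ * δ * κ₂ * (κ₂⁻¹ * δ' * κ₁⁻¹) = κ₁ * (δ * δ') * κ₁⁻¹ := by group
          _ = 1 := by rw [hδδ']; group
      exact inv_eq_of_mul_eq_one_right hmul
    have hdiaginvE : ∀ i j, |diagonal (fun i => (v i)⁻¹) i j| ≤ maxB^(n-1) := by
      intro i j
      rw [Matrix.diagonal_apply]
      split
      · rw [abs_of_pos (inv_pos.2 (hvpos i))]
        exact hvinv _
      · simp only [abs_zero]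
        exact pow_nonneg hmaxB0 _
    have hinvhE : h⁻¹ ∈ SLbd n R₃ := by
      intro i j
      rw [hinvh, Matrix.SpecialLinearGroup.coe_mul, Matrix.SpecialLinearGroup.coe_mul,
        hk1inv, hk2inv]
      have := entry3 hk2T hdiaginvE hk1T zero_le_one (pow_nonneg hmaxB0 _) i j
      calc |((κ₂ : MM n)ᵀ * ((δ' : SL n) : MM n) * (κ₁ : MM n)ᵀ) i j|
          ≤ (n:ℝ)^2 * 1 * maxB^(n-1) * 1 := this
        _ = R₃ := by rw [hR₃def]; ring
    -- conclude for a
    have hfin : ((h⁻¹ : SL n), (1:A)) * ((h, a) : SL n × A) = ((1 : SL n), a) := by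
      simp only [Prod.mk_mul_mk, Prod.mk.injEq]
      exact ⟨inv_mul_cancel h, one_mul a⟩
    have est3 : L ((1 : SL n), a) ≤ C₃ := by
      rw [← hfin, hC₃def]
      calc L (((h⁻¹ : SL n), (1:A)) * ((h, a) : SL n × A))
          ≤ L ((h⁻¹ : SL n), (1:A)) + L (h, a) := Lsub _ _
        _ ≤ M₂ + c := add_le_add (hM₂ _ ⟨hinvhE, rfl⟩) hp
    exact ⟨hhE, est3⟩
  -- conclude
  have hsub : {x : SL n × A | L x ≤ c} ⊆ (SLbd n R₂) ×ˢ {a : A | L (1, a) ≤ C₃} := by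
    rintro ⟨h, a⟩ hx
    obtain ⟨h1, h2⟩ := key (h, a) hx
    exact ⟨h1, h2⟩
  have hclosure : closure {x : SL n × A | L x ≤ c}
      ⊆ (SLbd n R₂) ×ˢ closure {a : A | L (1, a) ≤ C₃} := by
    calc closure {x : SL n × A | L x ≤ c}
        ⊆ closure ((SLbd n R₂) ×ˢ {a : A | L (1, a) ≤ C₃}) := closure_mono hsub
      _ = closure (SLbd n R₂) ×ˢ closure {a : A | L (1, a) ≤ C₃} := closure_prod_eq
      _ = (SLbd n R₂) ×ˢ closure {a : A | L (1, a) ≤ C₃} := by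
          rw [(isClosed_SLbd R₂).closure_eq]
  exact IsCompact.of_isClosed_subset ((isCompact_SLbd R₂).prod (hA C₃))
    isClosed_closure hclosure
end

section
/- Let n ≥ 2 and let (g_m) be a sequence in SL(n, ℝ) that is unbounded (does not lie in any compact subset of SL(n, ℝ)). Then there exist sequences (k_m), (k'_m) in SL(n, ℝ) lying in a compact subset, and an element u ∈ SL(n, ℝ), such that the sequence of commutators [k_m g_m k'_m, u] = (k_m g_m k'_m) u (k_m g_m k'_m)⁻¹ u⁻¹ is unbounded in SL(n, ℝ). -/
open scoped NNReal Topology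

namespace Stmt17Aux

variable {n : ℕ}



/-- entrywise-bounded subsets of SL(n,ℝ) are compact -/
lemma isCompact_entryBounded (C : ℝ) :
    IsCompact {x : Matrix.SpecialLinearGroup (Fin n) ℝ | ∀ i j, |x.1 i j| ≤ C} := by
  refine (Subtype.isCompact_iff (p := fun A : Matrix (Fin n) (Fin n) ℝ => A.det = 1)).mpr ?_
  have hbox : IsCompact {A : Matrix (Fin n) (Fin n) ℝ | ∀ i j, A i j ∈ Set.Icc (-C) C} := by
    have h := isCompact_univ_pi
      (fun _ : Fin n => isCompact_univ_pi (fun _ : Fin n => isCompact_Icc (a := -C) (b := C)))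
    have heq : {A : Matrix (Fin n) (Fin n) ℝ | ∀ i j, A i j ∈ Set.Icc (-C) C}
        = (Set.univ.pi fun _ : Fin n => Set.univ.pi fun _ : Fin n => Set.Icc (-C) C) := by
      ext A
      exact ⟨fun hA i _ j _ => hA i j, fun hA i j => hA i (Set.mem_univ _) j (Set.mem_univ _)⟩
    rw [heq]
    exact h
  have hclosed : IsClosed {A : Matrix (Fin n) (Fin n) ℝ | A.det = 1} :=
    isClosed_eq (continuous_id.matrix_det) continuous_const
  have himg : ((↑) '' {x : Matrix.SpecialLinearGroup (Fin n) ℝ | ∀ i j, |x.1 i j| ≤ C}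
        : Set (Matrix (Fin n) (Fin n) ℝ))
      = {A : Matrix (Fin n) (Fin n) ℝ | ∀ i j, A i j ∈ Set.Icc (-C) C}
        ∩ {A : Matrix (Fin n) (Fin n) ℝ | A.det = 1} := by
    ext A
    constructor
    · rintro ⟨x, hx, rfl⟩
      exact ⟨fun i j => Set.mem_Icc.mpr (abs_le.mp (hx i j)), x.2⟩
    · rintro ⟨h1, h2⟩
      exact ⟨⟨A, h2⟩, fun i j => abs_le.mpr (Set.mem_Icc.mp (h1 i j)), rfl⟩
  have hres := hbox.inter_right hclosed
  rw [← himg] at hres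
  exact hres

/-- compact subsets of SL(n,ℝ) are entrywise bounded -/
lemma entryBounded_of_isCompact {K : Set (Matrix.SpecialLinearGroup (Fin n) ℝ)}
    (hK : IsCompact K) : ∃ E : ℝ, ∀ x ∈ K, ∀ i j, |x.1 i j| ≤ E := by
  set f : Matrix.SpecialLinearGroup (Fin n) ℝ → ℝ := fun x => ∑ i, ∑ j, |x.1 i j| with hf
  have hfc : Continuous f := by
    apply continuous_finset_sum
    intro i _
    apply continuous_finset_sum
    intro j _
    have hcoe : Continuous (fun x : Matrix.SpecialLinearGroup (Fin n) ℝ => x.1) :=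
      continuous_subtype_val
    exact ((continuous_apply j).comp ((continuous_apply i).comp hcoe)).abs
  obtain ⟨E, hE⟩ := (hK.image hfc).bddAbove
  refine ⟨E, fun x hx i j => ?_⟩
  have h1 : f x ≤ E := hE (Set.mem_image_of_mem f hx)
  have h2 : |x.1 i j| ≤ ∑ j, |x.1 i j| :=
    Finset.single_le_sum (f := fun j => |x.1 i j|) (fun _ _ => abs_nonneg _) (Finset.mem_univ j)
  have h3 : ∑ j, |x.1 i j| ≤ f x :=
    Finset.single_le_sum (f := fun i => ∑ j, |x.1 i j|)
      (fun _ _ => Finset.sum_nonneg fun _ _ => abs_nonneg _) (Finset.mem_univ i)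
  linarith




lemma key (hn : 2 ≤ n) (g : Matrix.SpecialLinearGroup (Fin n) ℝ) (C : ℝ) (hC : 0 ≤ C)
    (h : ∀ c r a b : Fin n, c ≠ r → |g.1 a c| * |(g⁻¹).1 r b| ≤ C) (i j : Fin n) :
    |g.1 i j| ≤ (n.factorial : ℝ) * (1 + n * C) ^ n := by
  haveI : NeZero n := ⟨by omega⟩
  set A := g.1 with hA
  set B := (g⁻¹).1 with hB
  have hAB : A * B = 1 := by
    have h1 : g * g⁻¹ = 1 := mul_inv_cancel g
    calc A * B = ((g * g⁻¹ : Matrix.SpecialLinearGroup (Fin n) ℝ) : Matrix (Fin n) (Fin n) ℝ) :=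
          (Matrix.SpecialLinearGroup.coe_mul _ _).symm
      _ = 1 := by rw [h1]; rfl
  have hadj : A = B.adjugate := by
    have h2 : ((g⁻¹)⁻¹ : Matrix.SpecialLinearGroup (Fin n) ℝ) = g := inv_inv g
    calc A = (((g⁻¹)⁻¹ : Matrix.SpecialLinearGroup (Fin n) ℝ) : Matrix (Fin n) (Fin n) ℝ) := by
          rw [h2]
      _ = B.adjugate := Matrix.SpecialLinearGroup.coe_inv g⁻¹
  obtain ⟨⟨p, c0⟩, -, hmaxA⟩ := Finset.exists_max_image (Finset.univ : Finset (Fin n × Fin n))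
    (fun t => |A t.1 t.2|) ⟨(0, 0), Finset.mem_univ _⟩
  obtain ⟨⟨r0, q⟩, -, hmaxB⟩ := Finset.exists_max_image (Finset.univ : Finset (Fin n × Fin n))
    (fun t => |B t.1 t.2|) ⟨(0, 0), Finset.mem_univ _⟩
  set α := |A p c0| with hαdef
  set β := |B r0 q| with hβdef
  have hα : ∀ x y, |A x y| ≤ α := fun x y => hmaxA (x, y) (Finset.mem_univ _)
  have hβ : ∀ x y, |B x y| ≤ β := fun x y => hmaxB (x, y) (Finset.mem_univ _)
  have hα0 : 0 ≤ α := abs_nonneg _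
  have hβ0 : 0 ≤ β := abs_nonneg _
  have hn2 : (2 : ℝ) ≤ (n : ℝ) := by exact_mod_cast hn
  -- Step 1 : α * β ≤ 1 + n * C
  have hP : α * β ≤ 1 + n * C := by
    by_cases hcr : c0 = r0
    · subst hcr
      -- main identity
      have hsum : ∑ k, A p k * B k q = (1 : Matrix (Fin n) (Fin n) ℝ) p q := by
        rw [← Matrix.mul_apply, hAB]
      have hsplit : A p c0 * B c0 q
          = (1 : Matrix (Fin n) (Fin n) ℝ) p q - ∑ k ∈ Finset.univ.erase c0, A p k * B k q := by
        rw [← hsum, ← Finset.add_sum_erase _ _ (Finset.mem_univ c0)]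
        ring
      have h1 : α * β ≤ 1 + ∑ k ∈ Finset.univ.erase c0, |A p k| * |B k q| := by
        have e0 : |(1 : Matrix (Fin n) (Fin n) ℝ) p q| ≤ 1 := by
          rw [Matrix.one_apply]
          split <;> simp
        calc α * β = |A p c0 * B c0 q| := by rw [abs_mul]
          _ ≤ |(1 : Matrix (Fin n) (Fin n) ℝ) p q|
              + |∑ k ∈ Finset.univ.erase c0, A p k * B k q| := by
                rw [hsplit]; exact abs_sub _ _
          _ ≤ 1 + ∑ k ∈ Finset.univ.erase c0, |A p k| * |B k q| := by
                gcongr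
                calc |∑ k ∈ Finset.univ.erase c0, A p k * B k q|
                    ≤ ∑ k ∈ Finset.univ.erase c0, |A p k * B k q| :=
                      Finset.abs_sum_le_sum_abs _ _
                  _ = ∑ k ∈ Finset.univ.erase c0, |A p k| * |B k q| := by
                      simp [abs_mul]
      -- multiply by α * β
      have h2 : ∀ k ∈ Finset.univ.erase c0, (α * β) * (|A p k| * |B k q|) ≤ C * C := by
        intro k hk
        have hk' : k ≠ c0 := Finset.ne_of_mem_erase hk
        have e1 : |A p k| * |B c0 q| ≤ C := h k c0 p q hk'
        have e2 : |A p c0| * |B k q| ≤ C := h c0 k p q (Ne.symm hk')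
        have e3 : (α * β) * (|A p k| * |B k q|) = (|A p k| * β) * (α * |B k q|) := by
          rw [hαdef, hβdef]; ring
        rw [e3]
        exact mul_le_mul e1 e2 (by positivity) hC
      have h3 : ∑ k ∈ Finset.univ.erase c0, (α * β) * (|A p k| * |B k q|)
          ≤ (Finset.univ.erase c0).card • (C * C) :=
        Finset.sum_le_card_nsmul _ _ _ h2
      have hcard : ((Finset.univ.erase c0).card : ℝ) ≤ (n : ℝ) := by
        have := Finset.card_erase_le (s := (Finset.univ : Finset (Fin n))) (a := c0)
        have h4 : (Finset.univ : Finset (Fin n)).card = n := by simp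
        exact_mod_cast le_trans this (le_of_eq h4)
      have h5 : (α * β) * (α * β) ≤ (α * β) * (1 + ∑ k ∈ Finset.univ.erase c0, |A p k| * |B k q|) :=
        mul_le_mul_of_nonneg_left h1 (by positivity)
      have h6 : (α * β) * (1 + ∑ k ∈ Finset.univ.erase c0, |A p k| * |B k q|)
          = (α * β) + ∑ k ∈ Finset.univ.erase c0, (α * β) * (|A p k| * |B k q|) := by
        rw [mul_add, mul_one, Finset.mul_sum]
      have h7 : (α * β) * (α * β) ≤ (α * β) + (n : ℝ) * (C * C) := by
        rw [h6] at h5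
        have h8 : ∑ k ∈ Finset.univ.erase c0, (α * β) * (|A p k| * |B k q|) ≤ (n : ℝ) * (C * C) := by
          refine le_trans h3 ?_
          rw [nsmul_eq_mul]
          exact mul_le_mul_of_nonneg_right hcard (by positivity)
        linarith
      -- conclude α * β ≤ 1 + n C
      by_contra hcon
      push_neg at hcon
      have hnc0 : (0:ℝ) ≤ (n:ℝ) * C := by positivity
      have hx : (α * β) * (α * β - 1 - (n:ℝ) * C) > 0 :=
        mul_pos (by linarith) (by linarith)
      have hy : (α * β - 1 - (n:ℝ) * C) * ((n:ℝ) * C) ≥ 0 := mul_nonneg (by linarith) hnc0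
      have hz : ((n:ℝ) * C) * ((n:ℝ) * C) ≥ (n:ℝ) * (C * C) := by nlinarith
      nlinarith [h7, hx, hy, hz]
    · have := h c0 r0 p q hcr
      nlinarith
  -- Step 2 : entries of A are bounded via the adjugate of B
  have hαadj : α ≤ (n.factorial : ℝ) * max β 1 ^ n := by
    have hup : ∀ x y, |(B.updateRow c0 (Pi.single p 1)) x y| ≤ max β 1 := by
      intro x y
      rw [Matrix.updateRow_apply]
      split
      · rw [Pi.single_apply]
        split <;> simp
      · exact le_trans (hβ x y) (le_max_left _ _)
    have hdet := Matrix.det_le (abv := (AbsoluteValue.abs : AbsoluteValue ℝ ℝ)) hup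
    rw [hαdef, hadj, Matrix.adjugate_apply]
    simpa [Fintype.card_fin, nsmul_eq_mul] using hdet
  have hfac1 : (1 : ℝ) ≤ (n.factorial : ℝ) := by
    exact_mod_cast Nat.one_le_iff_ne_zero.mpr (Nat.factorial_ne_zero n)
  have hbase1 : (1 : ℝ) ≤ 1 + n * C := by nlinarith
  have hgoal : α ≤ (n.factorial : ℝ) * (1 + n * C) ^ n := by
    rcases le_or_gt α 1 with hα1 | hα1
    · have : (1 : ℝ) ≤ (n.factorial : ℝ) * (1 + n * C) ^ n := by
        have h9 : (1:ℝ) ≤ (1 + n * C) ^ n := one_le_pow₀ hbase1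
        nlinarith
      linarith
    · have hβP : β ≤ α * β := by nlinarith
      have hmaxle : max β 1 ≤ 1 + n * C := max_le (by linarith) hbase1
      calc α ≤ (n.factorial : ℝ) * max β 1 ^ n := hαadj
        _ ≤ (n.factorial : ℝ) * (1 + n * C) ^ n := by
            have hpow : max β 1 ^ n ≤ (1 + n * C) ^ n :=
              pow_le_pow_left₀ (le_trans zero_le_one (le_max_right β 1)) hmaxle n
            exact mul_le_mul_of_nonneg_left hpow (by positivity)
  exact le_trans (hα i j) hgoal




/-- sign factor of a permutation as a real number -/
noncomputable def eps (σ : Equiv.Perm (Fin n)) : ℝ := ((Equiv.Perm.sign σ : ℤ) : ℝ)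

lemma eps_sq (σ : Equiv.Perm (Fin n)) : eps σ * eps σ = 1 := by
  rcases Int.units_eq_one_or (Equiv.Perm.sign σ) with h | h <;> simp [eps, h]

lemma abs_eps (σ : Equiv.Perm (Fin n)) : |eps σ| = 1 := by
  rcases Int.units_eq_one_or (Equiv.Perm.sign σ) with h | h <;> simp [eps, h]

/-- diagonal sign-correction matrix -/
noncomputable def dmat (i0 : Fin n) (σ : Equiv.Perm (Fin n)) : Matrix (Fin n) (Fin n) ℝ :=
  Matrix.diagonal (fun j => if j = i0 then eps σ else 1)

lemma det_dmat (i0 : Fin n) (σ : Equiv.Perm (Fin n)) : (dmat i0 σ).det = eps σ := by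
  rw [dmat, Matrix.det_diagonal]
  rw [Finset.prod_ite_eq' Finset.univ i0 (fun _ => eps σ)]
  simp

lemma dmat_mul_dmat (i0 : Fin n) (σ : Equiv.Perm (Fin n)) :
    dmat i0 σ * dmat i0 σ = 1 := by
  rw [dmat, Matrix.diagonal_mul_diagonal]
  have he : (fun i => (if i = i0 then eps σ else 1) * (if i = i0 then eps σ else 1))
      = fun _ : Fin n => (1 : ℝ) := by
    funext j
    by_cases hj : j = i0 <;> simp [hj, eps_sq]
  rw [he, Matrix.diagonal_one]

/-- signed permutation matrix, an element of `SL(n, ℝ)` -/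
noncomputable def W (i0 : Fin n) (σ : Equiv.Perm (Fin n)) :
    Matrix.SpecialLinearGroup (Fin n) ℝ :=
  ⟨σ.permMatrix ℝ * dmat i0 σ, by
    rw [Matrix.det_mul, Matrix.det_permutation, det_dmat]
    exact eps_sq σ⟩

/-- inverse of `W` -/
noncomputable def W' (i0 : Fin n) (σ : Equiv.Perm (Fin n)) :
    Matrix.SpecialLinearGroup (Fin n) ℝ :=
  ⟨dmat i0 σ * (σ⁻¹.permMatrix ℝ), by
    rw [Matrix.det_mul, Matrix.det_permutation, det_dmat]
    rw [Equiv.Perm.sign_inv]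
    exact eps_sq σ⟩

lemma W_mul_W' (i0 : Fin n) (σ : Equiv.Perm (Fin n)) : W i0 σ * W' i0 σ = 1 := by
  apply Subtype.ext
  rw [Matrix.SpecialLinearGroup.coe_mul]
  show (σ.permMatrix ℝ * dmat i0 σ) * (dmat i0 σ * σ⁻¹.permMatrix ℝ) = _
  calc (σ.permMatrix ℝ * dmat i0 σ) * (dmat i0 σ * σ⁻¹.permMatrix ℝ)
      = σ.permMatrix ℝ * (dmat i0 σ * dmat i0 σ) * σ⁻¹.permMatrix ℝ := by
        simp only [Matrix.mul_assoc]
    _ = σ.permMatrix ℝ * σ⁻¹.permMatrix ℝ := by rw [dmat_mul_dmat, Matrix.mul_one]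
    _ = 1 := by
        show (σ.toPEquiv.toMatrix : Matrix (Fin n) (Fin n) ℝ) * σ⁻¹.toPEquiv.toMatrix = 1
        rw [← PEquiv.toMatrix_trans, ← Equiv.toPEquiv_trans]
        have : σ.trans σ⁻¹ = Equiv.refl (Fin n) := Equiv.self_trans_symm σ
        rw [this, Equiv.toPEquiv_refl, PEquiv.toMatrix_refl]

lemma W_inv (i0 : Fin n) (σ : Equiv.Perm (Fin n)) : (W i0 σ)⁻¹ = W' i0 σ :=
  inv_eq_of_mul_eq_one_right (W_mul_W' i0 σ)

/-- column `i0` of `A * W σ` is the `σ⁻¹ i0` column of `A`, up to sign -/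
lemma mul_W_apply (i0 : Fin n) (σ : Equiv.Perm (Fin n)) (A : Matrix (Fin n) (Fin n) ℝ)
    (x : Fin n) : (A * (W i0 σ).1) x i0 = A x (σ⁻¹ i0) * eps σ := by
  show (A * (σ.permMatrix ℝ * dmat i0 σ)) x i0 = _
  rw [← Matrix.mul_assoc, dmat, Matrix.mul_diagonal]
  rw [PEquiv.mul_toMatrix_toPEquiv]
  have hs : σ⁻¹ i0 = σ.symm i0 := rfl
  simp [Matrix.submatrix_apply, hs]

/-- row `i1 ≠ i0` of `(W σ)⁻¹ * B` is the `σ⁻¹ i1` row of `B` -/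
lemma W_inv_mul_apply (i0 i1 : Fin n) (h : i1 ≠ i0) (σ : Equiv.Perm (Fin n))
    (B : Matrix (Fin n) (Fin n) ℝ) (y : Fin n) :
    (((W i0 σ)⁻¹).1 * B) i1 y = B (σ⁻¹ i1) y := by
  rw [W_inv]
  show ((dmat i0 σ * σ⁻¹.permMatrix ℝ) * B) i1 y = _
  rw [Matrix.mul_assoc, dmat, Matrix.diagonal_mul]
  rw [PEquiv.toMatrix_toPEquiv_mul]
  simp [Matrix.submatrix_apply, h]




lemma exists_perm (i0 i1 c r : Fin n) (h01 : i0 ≠ i1) (hcr : c ≠ r) :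
    ∃ π : Equiv.Perm (Fin n), π i0 = c ∧ π i1 = r := by
  set w := Equiv.swap i0 c r with hw
  have hw0 : w ≠ i0 := by
    intro hweq
    have h2 := congrArg (Equiv.swap i0 c) hweq
    rw [hw, Equiv.swap_apply_self, Equiv.swap_apply_left] at h2
    exact hcr h2.symm
  refine ⟨(Equiv.swap i1 w).trans (Equiv.swap i0 c), ?_, ?_⟩
  · rw [Equiv.trans_apply, Equiv.swap_apply_of_ne_of_ne h01 (Ne.symm hw0),
      Equiv.swap_apply_left]
  · rw [Equiv.trans_apply, Equiv.swap_apply_left, hw, Equiv.swap_apply_self]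

lemma mul_std_mul (i j x y : Fin n) (P Q : Matrix (Fin n) (Fin n) ℝ) :
    (P * Matrix.single i j (1 : ℝ) * Q) x y = P x i * Q j y := by
  rw [Matrix.mul_assoc, Matrix.mul_apply]
  rw [Finset.sum_eq_single i]
  · rw [Matrix.single_mul_apply_same, one_mul]
  · intro k _ hk
    rw [Matrix.single_mul_apply_of_ne _ _ _ _ _ hk, mul_zero]
  · intro hk
    exact absurd (Finset.mem_univ i) hk

lemma mul_std_apply (i j x y : Fin n) (P : Matrix (Fin n) (Fin n) ℝ) :
    (P * Matrix.single i j (1 : ℝ)) x y = if y = j then P x i else 0 := by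
  by_cases hy : y = j
  · subst hy
    rw [Matrix.mul_single_apply_same, mul_one, if_pos rfl]
  · rw [Matrix.mul_single_apply_of_ne _ _ _ _ _ hy, if_neg hy]


end Stmt17Aux

open Stmt17Aux in
/-- for any unbounded sequence `(g_m)` in `SL(n, ℝ)` (`n ≥ 2`) there
are sequences `(k_m)`, `(k'_m)` lying in a compact set and an element `u` such that
the commutators `[k_m g_m k'_m, u]` form an unbounded sequence. -/
theorem stmt_17 (n : ℕ) (hn : 2 ≤ n) (g : ℕ → Matrix.SpecialLinearGroup (Fin n) ℝ)
    (hg : ¬ ∃ K : Set (Matrix.SpecialLinearGroup (Fin n) ℝ),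
      IsCompact K ∧ ∀ m, g m ∈ K) :
    ∃ (k k' : ℕ → Matrix.SpecialLinearGroup (Fin n) ℝ)
      (u : Matrix.SpecialLinearGroup (Fin n) ℝ),
      (∃ C : Set (Matrix.SpecialLinearGroup (Fin n) ℝ),
        IsCompact C ∧ (∀ m, k m ∈ C) ∧ (∀ m, k' m ∈ C)) ∧
      ¬ ∃ K : Set (Matrix.SpecialLinearGroup (Fin n) ℝ), IsCompact K ∧ ∀ m,
        (k m * g m * k' m) * u * (k m * g m * k' m)⁻¹ * u⁻¹ ∈ K := by
  classical
  have hn0 : 0 < n := by omega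
  have hn1 : 1 < n := by omega
  set i0 : Fin n := ⟨0, hn0⟩ with hi0def
  set i1 : Fin n := ⟨1, hn1⟩ with hi1def
  have h01 : i0 ≠ i1 := by simp [hi0def, hi1def, Fin.ext_iff]
  set u : Matrix.SpecialLinearGroup (Fin n) ℝ :=
    ⟨Matrix.transvection i0 i1 1, Matrix.det_transvection_of_ne i0 i1 h01 1⟩ with hudef
  have hchoice : ∀ m : ℕ, ∃ t : (Fin n × Fin n) × Fin n × Fin n, t.1.1 ≠ t.1.2 ∧
      ∀ s : (Fin n × Fin n) × Fin n × Fin n, s.1.1 ≠ s.1.2 →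
        |(g m).1 s.2.1 s.1.1| * |((g m)⁻¹).1 s.1.2 s.2.2|
          ≤ |(g m).1 t.2.1 t.1.1| * |((g m)⁻¹).1 t.1.2 t.2.2| := by
    intro m
    obtain ⟨t, htmem, hmax⟩ := Finset.exists_max_image
      (Finset.univ.filter fun s : (Fin n × Fin n) × Fin n × Fin n => s.1.1 ≠ s.1.2)
      (fun s => |(g m).1 s.2.1 s.1.1| * |((g m)⁻¹).1 s.1.2 s.2.2|)
      ⟨((i0, i1), i0, i0), by simp [h01]⟩
    refine ⟨t, (Finset.mem_filter.mp htmem).2, fun s hs => hmax s ?_⟩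
    simp [hs]
  choose t ht1 ht2 using hchoice
  have hperm : ∀ m, ∃ π : Equiv.Perm (Fin n), π i0 = (t m).1.1 ∧ π i1 = (t m).1.2 :=
    fun m => exists_perm i0 i1 _ _ h01 (ht1 m)
  choose π hπ0 hπ1 using hperm
  set k' : ℕ → Matrix.SpecialLinearGroup (Fin n) ℝ := fun m => W i0 (π m)⁻¹ with hk'def
  refine ⟨fun _ => 1, k', u,
    ⟨{(1 : Matrix.SpecialLinearGroup (Fin n) ℝ)} ∪ Set.range (W (n := n) i0), ?_, ?_, ?_⟩, ?_⟩
  · exact ((Set.finite_singleton _).union (Set.finite_range _)).isCompact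
  · intro m; exact Or.inl rfl
  · intro m; exact Or.inr ⟨(π m)⁻¹, rfl⟩
  rintro ⟨K, hK, hmem⟩
  obtain ⟨E, hE⟩ := entryBounded_of_isCompact hK
  have hE0 : 0 ≤ E := le_trans (abs_nonneg _) (hE _ (hmem 0) i0 i0)
  -- uniform bound on the entries of `g m`
  have hbound : ∀ m i j, |(g m).1 i j| ≤ (n.factorial : ℝ) * (1 + n * (2 * E + 1)) ^ n := by
    intro m i j
    apply key hn (g m) (2 * E + 1) (by linarith)
    intro c r a b hcr
    refine le_trans (ht2 m ((c, r), a, b) hcr) ?_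
    -- commutator analysis for the maximizing tuple
    set c0 := (t m).1.1 with hc0
    set r0 := (t m).1.2 with hr0
    set a0 := (t m).2.1 with ha0
    set b0 := (t m).2.2 with hb0
    set σ : Equiv.Perm (Fin n) := (π m)⁻¹ with hσ
    set h : Matrix.SpecialLinearGroup (Fin n) ℝ := (fun _ => 1) m * g m * k' m with hhdef
    set X : Matrix.SpecialLinearGroup (Fin n) ℝ := h * u * h⁻¹ * u⁻¹ with hXdef
    have hXK : X ∈ K := hmem m
    have hXE : ∀ x y, |X.1 x y| ≤ E := hE X hXK
    set U : Matrix (Fin n) (Fin n) ℝ := u.1 with hUdef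
    have hUtrans : U = 1 + Matrix.single i0 i1 (1 : ℝ) := rfl
    have hVU : (u⁻¹).1 * U = 1 := by
      have h2 : ((u⁻¹ * u : Matrix.SpecialLinearGroup (Fin n) ℝ) : Matrix (Fin n) (Fin n) ℝ)
          = 1 := by rw [inv_mul_cancel]; rfl
      rw [Matrix.SpecialLinearGroup.coe_mul] at h2
      exact h2
    have hN : h.1 * (h⁻¹).1 = 1 := by
      have h2 : ((h * h⁻¹ : Matrix.SpecialLinearGroup (Fin n) ℝ) : Matrix (Fin n) (Fin n) ℝ)
          = 1 := by rw [mul_inv_cancel]; rfl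
      rw [Matrix.SpecialLinearGroup.coe_mul] at h2
      exact h2
    have hXU : X.1 * U = h.1 * U * (h⁻¹).1 := by
      have hXcoe : X.1 = h.1 * U * (h⁻¹).1 * (u⁻¹).1 := by
        rw [hXdef]
        simp only [Matrix.SpecialLinearGroup.coe_mul]
        rfl
      rw [hXcoe, Matrix.mul_assoc (h.1 * U * (h⁻¹).1), hVU, Matrix.mul_one]
    have hhuN : h.1 * U * (h⁻¹).1
        = 1 + h.1 * Matrix.single i0 i1 (1 : ℝ) * (h⁻¹).1 := by
      rw [hUtrans, Matrix.mul_add, Matrix.mul_one, Matrix.add_mul, hN]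
    -- the key entry bound
    have hkey : ∀ x y, |h.1 x i0 * (h⁻¹).1 i1 y| ≤ 2 * E + 1 := by
      intro x y
      have he1 : h.1 x i0 * (h⁻¹).1 i1 y
          = (X.1 * U) x y - (1 : Matrix (Fin n) (Fin n) ℝ) x y := by
        have h2 := congrFun (congrFun (hXU.trans hhuN) x) y
        rw [Matrix.add_apply, mul_std_mul] at h2
        rw [h2]
        ring
      have he2 : |(X.1 * U) x y| ≤ 2 * E := by
        have h3 : (X.1 * U) x y
            = X.1 x y + (X.1 * Matrix.single i0 i1 (1 : ℝ)) x y := by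
          rw [hUtrans, Matrix.mul_add, Matrix.mul_one, Matrix.add_apply]
        rw [h3, mul_std_apply]
        have h4 := hXE x y
        have h5 := hXE x i0
        have h6 := abs_nonneg (X.1 x y)
        split
        · calc |X.1 x y + X.1 x i0| ≤ |X.1 x y| + |X.1 x i0| := abs_add_le _ _
            _ ≤ 2 * E := by linarith
        · rw [add_zero]; linarith
      have he3 : |(1 : Matrix (Fin n) (Fin n) ℝ) x y| ≤ 1 := by
        rw [Matrix.one_apply]
        split <;> simp
      calc |h.1 x i0 * (h⁻¹).1 i1 y|
          ≤ |(X.1 * U) x y| + |(1 : Matrix (Fin n) (Fin n) ℝ) x y| := by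
            rw [he1]; exact abs_sub _ _
        _ ≤ 2 * E + 1 := by linarith
    -- identify the entries
    have hgk : h = g m * k' m := by rw [hhdef, one_mul]
    have hcol : ∀ x, h.1 x i0 = (g m).1 x c0 * eps σ := by
      intro x
      rw [hgk, Matrix.SpecialLinearGroup.coe_mul, hk'def]
      rw [mul_W_apply i0 σ]
      rw [hσ, inv_inv, hπ0 m]
    have hrow : ∀ y, (h⁻¹).1 i1 y = ((g m)⁻¹).1 r0 y := by
      intro y
      rw [hgk, mul_inv_rev, Matrix.SpecialLinearGroup.coe_mul, hk'def]
      rw [W_inv_mul_apply i0 i1 (Ne.symm h01) σ]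
      rw [hσ, inv_inv, hπ1 m]
    have hfin : |(g m).1 a0 c0| * |((g m)⁻¹).1 r0 b0| ≤ 2 * E + 1 := by
      have h7 := hkey a0 b0
      rw [hcol a0, hrow b0] at h7
      rw [abs_mul, abs_mul, abs_eps, mul_one] at h7
      rw [← abs_mul]
      rw [← abs_mul] at h7
      exact h7
    exact hfin
  exact hg ⟨{x : Matrix.SpecialLinearGroup (Fin n) ℝ |
      ∀ i j, |x.1 i j| ≤ (n.factorial : ℝ) * (1 + n * (2 * E + 1)) ^ n},
    isCompact_entryBounded _, fun m i j => hbound m i j⟩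
end

section
/- Let G be a locally compact group and L : G → [0,∞) a function that is bounded on compact subsets of G and satisfies the control axiom: there is a nondecreasing function φ : [0,∞) → [0,∞) such that L(xy) ≤ φ(max(L(x), L(y))) for all x, y ∈ G. Then there exists a semigroup length L₁ on G (i.e. L₁ is bounded on compact subsets and L₁(xy) ≤ L₁(x) + L₁(y) for all x,y) that is coarsely equivalent to L: there exist nondecreasing functions u₁, u₂ : [0,∞) → [0,∞) with u₁(t) → ∞ and u₂(t) → ∞ as t → ∞ such that L ≤ u₂ ∘ L₁ and L₁ ≤ u₁ ∘ L. Moreover, if L(x) = L(x⁻¹) for all x, then L₁ can be taken symmetric as well. -/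
open scoped NNReal Topology

noncomputable def aSeq (φ : ℝ → ℝ) : ℕ → ℝ
  | 0 => 0
  | n + 1 => max (φ (aSeq φ n)) 0 + aSeq φ n + 1

lemma aSeq_ge (φ : ℝ → ℝ) : ∀ n : ℕ, (n : ℝ) ≤ aSeq φ n := by
  intro n
  induction n with
  | zero => simp [aSeq]
  | succ n ih =>
    have : aSeq φ (n + 1) = max (φ (aSeq φ n)) 0 + aSeq φ n + 1 := rfl
    push_cast
    nlinarith [le_max_right (φ (aSeq φ n)) 0]

lemma aSeq_nonneg (φ : ℝ → ℝ) (n : ℕ) : 0 ≤ aSeq φ n :=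
  le_trans (by positivity) (aSeq_ge φ n)

lemma aSeq_lt_succ (φ : ℝ → ℝ) (n : ℕ) : aSeq φ n < aSeq φ (n + 1) := by
  have : aSeq φ (n + 1) = max (φ (aSeq φ n)) 0 + aSeq φ n + 1 := rfl
  nlinarith [le_max_right (φ (aSeq φ n)) 0]

lemma aSeq_strictMono (φ : ℝ → ℝ) : StrictMono (aSeq φ) :=
  strictMono_nat_of_lt_succ (aSeq_lt_succ φ)

noncomputable def fIdx (φ : ℝ → ℝ) (t : ℝ) : ℕ := sInf {n : ℕ | t < aSeq φ n}

lemma fIdx_set_nonempty (φ : ℝ → ℝ) (t : ℝ) : {n : ℕ | t < aSeq φ n}.Nonempty := by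
  obtain ⟨n, hn⟩ := exists_nat_gt t
  exact ⟨n, lt_of_lt_of_le hn (aSeq_ge φ n)⟩

lemma lt_aSeq_fIdx (φ : ℝ → ℝ) (t : ℝ) : t < aSeq φ (fIdx φ t) :=
  Nat.sInf_mem (fIdx_set_nonempty φ t)

lemma fIdx_mono (φ : ℝ → ℝ) : Monotone (fIdx φ) := by
  intro s t hst
  have ht := Nat.sInf_mem (fIdx_set_nonempty φ t)
  exact Nat.sInf_le (lt_of_le_of_lt hst ht)

lemma fIdx_le_of_lt (φ : ℝ → ℝ) {t : ℝ} {n : ℕ} (h : t < aSeq φ n) : fIdx φ t ≤ n :=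
  Nat.sInf_le h

lemma one_le_fIdx (φ : ℝ → ℝ) {t : ℝ} (ht : 0 ≤ t) : 1 ≤ fIdx φ t := by
  by_contra h
  have h0 : fIdx φ t = 0 := by omega
  have := lt_aSeq_fIdx φ t
  rw [h0] at this
  simp only [aSeq] at this
  linarith

lemma fIdx_phi_le (φ : ℝ → ℝ) (hφ : Monotone φ) (t : ℝ) :
    fIdx φ (φ t) ≤ fIdx φ t + 1 := by
  set m := fIdx φ t with hm
  have ht : t < aSeq φ m := lt_aSeq_fIdx φ t
  have h1 : φ t ≤ φ (aSeq φ m) := hφ ht.le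
  have h2 : φ t < aSeq φ (m + 1) := by
    have : aSeq φ (m + 1) = max (φ (aSeq φ m)) 0 + aSeq φ m + 1 := rfl
    have h3 := aSeq_nonneg φ m
    nlinarith [le_max_left (φ (aSeq φ m)) 0]
  exact fIdx_le_of_lt φ h2

lemma ge_fIdx_atTop (φ : ℝ → ℝ) {t : ℝ} {N : ℕ} (h : aSeq φ N ≤ t) : N < fIdx φ t := by
  have ht := lt_aSeq_fIdx φ t
  by_contra hc
  push_neg at hc
  have := (aSeq_strictMono φ).monotone hc
  linarith

/-- every weak length (locally bounded with the control axiom) on a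
locally compact group is coarsely equivalent to a semigroup length, which may be
taken symmetric whenever the weak length is. -/
theorem stmt_18 {G : Type*} [Group G] [TopologicalSpace G] [IsTopologicalGroup G]
    [LocallyCompactSpace G] (L : G → ℝ) (hnonneg : ∀ x, 0 ≤ L x)
    (hbdd : ∀ K : Set G, IsCompact K → ∃ M : ℝ, ∀ x ∈ K, L x ≤ M)
    (φ : ℝ → ℝ) (hφ : Monotone φ)
    (hctrl : ∀ x y, L (x * y) ≤ φ (max (L x) (L y))) :
    ∃ L₁ : G → ℝ, IsSemigroupLength L₁ ∧
      (∃ u₁ u₂ : ℝ → ℝ, Monotone u₁ ∧ Monotone u₂ ∧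
        Filter.Tendsto u₁ Filter.atTop Filter.atTop ∧
        Filter.Tendsto u₂ Filter.atTop Filter.atTop ∧
        (∀ x, L₁ x ≤ u₁ (L x)) ∧ (∀ x, L x ≤ u₂ (L₁ x))) ∧
      ((∀ x, L x = L x⁻¹) → ∀ x, L₁ x = L₁ x⁻¹) := by
  classical
  refine ⟨fun x => (fIdx φ (L x) : ℝ), ⟨fun x => by positivity, ?_, ?_⟩, ?_, ?_⟩
  · -- bounded on compacts
    intro K hK
    obtain ⟨M, hM⟩ := hbdd K hK
    refine ⟨(fIdx φ M : ℝ), fun x hx => ?_⟩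
    simp only []
    exact_mod_cast fIdx_mono φ (hM x hx)
  · -- subadditive
    intro x y
    have h1 : fIdx φ (L (x * y)) ≤ fIdx φ (φ (max (L x) (L y))) :=
      fIdx_mono φ (hctrl x y)
    have h2 : fIdx φ (φ (max (L x) (L y))) ≤ fIdx φ (max (L x) (L y)) + 1 :=
      fIdx_phi_le φ hφ _
    have h3 : fIdx φ (max (L x) (L y)) + 1 ≤ fIdx φ (L x) + fIdx φ (L y) := by
      rcases le_total (L x) (L y) with h | h
      · have hx1 : 1 ≤ fIdx φ (L x) := one_le_fIdx φ (hnonneg x)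
        rw [max_eq_right h]; omega
      · have hy1 : 1 ≤ fIdx φ (L y) := one_le_fIdx φ (hnonneg y)
        rw [max_eq_left h]; omega
    have h4 : fIdx φ (L (x * y)) ≤ fIdx φ (L x) + fIdx φ (L y) := by omega
    simp only []
    exact_mod_cast h4
  · -- coarse equivalence
    refine ⟨fun t => (fIdx φ t : ℝ), fun s => aSeq φ ⌈s⌉₊, ?_, ?_, ?_, ?_, ?_, ?_⟩
    · intro s t hst
      simp only []
      exact_mod_cast fIdx_mono φ hst
    · intro s t hst; exact (aSeq_strictMono φ).monotone (Nat.ceil_mono hst)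
    · -- u₁ tendsto atTop
      rw [Filter.tendsto_atTop]
      intro b
      filter_upwards [Filter.eventually_ge_atTop (aSeq φ ⌈b⌉₊)] with t ht
      have := ge_fIdx_atTop φ ht
      calc b ≤ (⌈b⌉₊ : ℝ) := Nat.le_ceil b
        _ ≤ (fIdx φ t : ℝ) := by exact_mod_cast this.le
    · -- u₂ tendsto atTop
      refine Filter.tendsto_atTop_mono (fun s => ?_) Filter.tendsto_id
      calc (s : ℝ) ≤ (⌈s⌉₊ : ℝ) := by
            rcases le_total s 0 with h | h
            · exact h.trans (by positivity)
            · exact Nat.le_ceil s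
        _ ≤ aSeq φ ⌈s⌉₊ := aSeq_ge φ _
    · intro x; exact le_refl _
    · intro x
      have h1 : L x < aSeq φ (fIdx φ (L x)) := lt_aSeq_fIdx φ (L x)
      have h2 : ⌈(fIdx φ (L x) : ℝ)⌉₊ = fIdx φ (L x) := Nat.ceil_natCast _
      show L x ≤ aSeq φ ⌈(fIdx φ (L x) : ℝ)⌉₊
      rw [h2]
      exact h1.le
  · -- symmetry
    intro hsym x
    simp [hsym x]
end
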